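/- arXiv:2512.04151 — 6 statements merged into one kernel-verified Lean document; each statement's English description precedes it below -/
import Mathlib

section
/- Let A be a real m×n matrix, a ∈ ℝ^m, c ∈ ℝ^n and b ∈ ℝ, and suppose the system A x ≤ a (componentwise) has at least one solution x ∈ ℝ^n. Then the implication (for all x ∈ ℝ^n, A x ≤ a implies cᵀx ≤ b) holds if and only if there exists λ ∈ ℝ^m with λ ≥ 0 componentwise such that Aᵀλ = c and λᵀa ≤ b. -/
open Matrix
open Finset

/-- Carathéodory's theorem for cones: a nonnegative combination of vectors indexed by a
finite set can be rewritten as a nonnegative combination over a linearly independent subset. -/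
lemma cone_caratheodory {E : Type*} [AddCommGroup E] [Module ℝ E] {ι : Type*} [DecidableEq ι]
    (v : ι → E) (x : E) :
    ∀ s : Finset ι, (∃ l : ι → ℝ, (∀ i ∈ s, 0 ≤ l i) ∧ ∑ i ∈ s, l i • v i = x) →
    ∃ t : Finset ι, t ⊆ s ∧ LinearIndependent ℝ (fun i : t => v i) ∧
      ∃ l : ι → ℝ, (∀ i ∈ t, 0 ≤ l i) ∧ ∑ i ∈ t, l i • v i = x := by
  intro s
  induction s using Finset.strongInduction with
  | _ s ih =>
    rintro ⟨l, hl, hsum⟩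
    by_cases hind : LinearIndependent ℝ (fun i : s => v i)
    · exact ⟨s, subset_rfl, hind, l, hl, hsum⟩
    · obtain ⟨g, hg0, i₁, hi₁⟩ := Fintype.not_linearIndependent_iff.mp hind
      have hexists : ∃ μ : ι → ℝ, (∑ i ∈ s, μ i • v i = 0) ∧ ∃ i₀ ∈ s, 0 < μ i₀ := by
        rcases hi₁.lt_or_gt with hneg | hpos
        · refine ⟨fun i => if h : i ∈ s then -g ⟨i, h⟩ else 0, ?_, ⟨i₁, i₁.2, ?_⟩⟩
          · rw [← Finset.sum_coe_sort s (fun i => (if h : i ∈ s then -g ⟨i, h⟩ else 0) • v i)]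
            have : ∀ i : s, (if h : (i : ι) ∈ s then -g ⟨i, h⟩ else 0) • v (i : ι)
                = -(g i • v (i : ι)) := by
              intro i; rw [dif_pos i.2]; simp
            rw [Finset.sum_congr rfl fun i _ => this i, Finset.sum_neg_distrib, hg0, neg_zero]
          · simp only [dif_pos i₁.2, Subtype.coe_eta]
            linarith
        · refine ⟨fun i => if h : i ∈ s then g ⟨i, h⟩ else 0, ?_, ⟨i₁, i₁.2, ?_⟩⟩
          · rw [← Finset.sum_coe_sort s (fun i => (if h : i ∈ s then g ⟨i, h⟩ else 0) • v i)]
            have : ∀ i : s, (if h : (i : ι) ∈ s then g ⟨i, h⟩ else 0) • v (i : ι)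
                = g i • v (i : ι) := by
              intro i; rw [dif_pos i.2]
            exact (Finset.sum_congr rfl fun i _ => this i).trans hg0
          · simp only [dif_pos i₁.2, Subtype.coe_eta]
            linarith
      obtain ⟨μ, hμ0, j₀, hj₀, hjpos⟩ := hexists
      have hTne : (s.filter (fun i => 0 < μ i)).Nonempty :=
        ⟨j₀, Finset.mem_filter.2 ⟨hj₀, hjpos⟩⟩
      obtain ⟨i₀, hi₀, hmin⟩ := Finset.exists_min_image _ (fun i => l i / μ i) hTne
      rw [Finset.mem_filter] at hi₀
      set r := l i₀ / μ i₀ with hr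
      have hμi₀ : 0 < μ i₀ := hi₀.2
      have hr0 : 0 ≤ r := div_nonneg (hl _ hi₀.1) hμi₀.le
      set l' : ι → ℝ := fun i => l i - r * μ i with hl'def
      have hl'0 : ∀ i ∈ s, 0 ≤ l' i := by
        intro i hi
        by_cases hμi : 0 < μ i
        · have h1 : r ≤ l i / μ i := hmin i (Finset.mem_filter.2 ⟨hi, hμi⟩)
          have h2 : r * μ i ≤ l i := (le_div_iff₀ hμi).mp h1
          simp only [hl'def]; linarith
        · push_neg at hμi
          have h1 : r * μ i ≤ 0 := mul_nonpos_of_nonneg_of_nonpos hr0 hμi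
          have h2 := hl i hi
          simp only [hl'def]; linarith
      have hl'i₀ : l' i₀ = 0 := by
        simp only [hl'def, hr]
        field_simp
        ring
      have hsum' : ∑ i ∈ s.erase i₀, l' i • v i = x := by
        rw [Finset.sum_erase _ (by rw [hl'i₀, zero_smul])]
        have hrw : ∑ i ∈ s, l' i • v i
            = (∑ i ∈ s, l i • v i) - r • ∑ i ∈ s, μ i • v i := by
          rw [Finset.smul_sum, ← Finset.sum_sub_distrib]
          refine Finset.sum_congr rfl fun i _ => ?_
          simp [hl'def, sub_smul, smul_smul]
        rw [hrw, hμ0, hsum, smul_zero, sub_zero]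
      obtain ⟨t, hts, hind', res⟩ := ih (s.erase i₀) (Finset.erase_ssubset hi₀.1)
        ⟨l', fun i hi => hl'0 i (Finset.mem_of_mem_erase hi), hsum'⟩
      exact ⟨t, hts.trans (Finset.erase_subset _ _), hind', res⟩

/-- A finitely generated cone in Euclidean space is closed. -/
lemma cone_isClosed {k m : ℕ} (v : Fin m → EuclideanSpace ℝ (Fin k)) :
    IsClosed {x : EuclideanSpace ℝ (Fin k) |
      ∃ l : Fin m → ℝ, (∀ i, 0 ≤ l i) ∧ ∑ i, l i • v i = x} := by
  classical
  have hrw : {x : EuclideanSpace ℝ (Fin k) |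
        ∃ l : Fin m → ℝ, (∀ i, 0 ≤ l i) ∧ ∑ i, l i • v i = x}
      = ⋃ t ∈ {t : Finset (Fin m) | LinearIndependent ℝ (fun i : t => v i)},
          (Fintype.linearCombination ℝ (fun i : t => v i)) '' (Set.Ici 0) := by
    ext x
    simp only [Set.mem_setOf_eq, Set.mem_iUnion, Set.mem_image, Set.mem_Ici, exists_prop]
    constructor
    · rintro ⟨l, hl, hsum⟩
      obtain ⟨t, -, hind, l', hl', hsum'⟩ := cone_caratheodory v x Finset.univ
        ⟨l, fun i _ => hl i, by simpa using hsum⟩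
      refine ⟨t, hind, fun i => l' i, ?_, ?_⟩
      · intro i
        exact hl' i i.2
      · rw [Fintype.linearCombination_apply]
        rw [← hsum', ← Finset.sum_coe_sort t (fun i => l' i • v i)]
    · rintro ⟨t, hind, f, hf, rfl⟩
      refine ⟨fun i => if h : i ∈ t then f ⟨i, h⟩ else 0, fun i => ?_, ?_⟩
      · show 0 ≤ if h : i ∈ t then f ⟨i, h⟩ else 0
        by_cases h : i ∈ t
        · rw [dif_pos h]; exact hf ⟨i, h⟩
        · rw [dif_neg h]
      · rw [Fintype.linearCombination_apply]
        have h1 : ∑ x : Fin m, (if h : x ∈ t then f ⟨x, h⟩ else 0) • v x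
            = ∑ x ∈ t, (if h : x ∈ t then f ⟨x, h⟩ else 0) • v x :=
          (Finset.sum_subset (Finset.subset_univ t)
            (fun i _ hi => by rw [dif_neg hi, zero_smul])).symm
        have h2 : ∑ x ∈ t, (if h : x ∈ t then f ⟨x, h⟩ else 0) • v x
            = ∑ i : t, f i • v (i : Fin m) := by
          rw [← Finset.sum_coe_sort t (fun x => (if h : x ∈ t then f ⟨x, h⟩ else 0) • v x)]
          exact Finset.sum_congr rfl fun i _ => by rw [dif_pos i.2]
        exact h1.trans h2
  rw [hrw]
  refine Set.Finite.isClosed_biUnion (Set.toFinite _) fun t ht => ?_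
  have hker : LinearMap.ker (Fintype.linearCombination ℝ (fun i : t => v i)) = ⊥ := by
    rw [LinearMap.ker_eq_bot']
    intro g hg
    exact funext fun i => Fintype.linearIndependent_iff.mp ht g
      (by simpa [Fintype.linearCombination_apply] using hg) i
  exact ((Fintype.linearCombination ℝ (fun i : t => v i)).isClosedEmbedding_of_injective
    hker).isClosedMap _ isClosed_Ici

/-- Farkas' lemma for cones, in dot-product form. -/
lemma cone_farkas {k m : ℕ} (v : Fin m → (Fin k → ℝ)) (c : Fin k → ℝ)
    (h : ∀ y : Fin k → ℝ, (∀ i, 0 ≤ v i ⬝ᵥ y) → 0 ≤ c ⬝ᵥ y) :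
    ∃ l : Fin m → ℝ, (∀ i, 0 ≤ l i) ∧ ∑ i, l i • v i = c := by
  classical
  open RealInnerProductSpace in
  let E := EuclideanSpace ℝ (Fin k)
  let vE : Fin m → E := fun i => WithLp.toLp 2 (v i)
  let cE : E := WithLp.toLp 2 c
  have inner_eq : ∀ p q : E, ⟪p, q⟫ = (p : Fin k → ℝ) ⬝ᵥ (q : Fin k → ℝ) := by
    intro p q
    simp [E, PiLp.inner_apply, dotProduct, RCLike.inner_apply, mul_comm]
  let K : ConvexCone ℝ E :=
    { carrier := {x : E | ∃ l : Fin m → ℝ, (∀ i, 0 ≤ l i) ∧ ∑ i, l i • vE i = x}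
      smul_mem' := by
        rintro r hr x ⟨l, hl, rfl⟩
        exact ⟨fun i => r * l i, fun i => mul_nonneg hr.le (hl i),
          by rw [Finset.smul_sum]; exact Finset.sum_congr rfl fun i _ => (smul_smul r (l i) (vE i)).symm⟩
      add_mem' := by
        rintro x ⟨l, hl, rfl⟩ y ⟨l', hl', rfl⟩
        exact ⟨fun i => l i + l' i, fun i => add_nonneg (hl i) (hl' i),
          by rw [← Finset.sum_add_distrib]; exact Finset.sum_congr rfl fun i _ => (add_smul (l i) (l' i) (vE i))⟩ }
  have hKmem : ∀ x : E, x ∈ K ↔ ∃ l : Fin m → ℝ, (∀ i, 0 ≤ l i) ∧ ∑ i, l i • vE i = x :=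
    fun x => Iff.rfl
  have hne : (K : Set E).Nonempty := ⟨0, 0, fun i => le_rfl, by simp⟩
  have hclosed : IsClosed (K : Set E) := cone_isClosed vE
  by_contra hc
  have hcK : cE ∉ K := by
    intro hmem
    obtain ⟨l, hl, hsum⟩ := (hKmem cE).mp hmem
    exact hc ⟨l, hl, (WithLp.ofLp_sum 2 _ Finset.univ fun i => l i • vE i).symm.trans (congrArg WithLp.ofLp hsum)⟩
  let P : ProperCone ℝ E :=
    { carrier := K
      add_mem' := fun ha hb => K.add_mem ha hb
      zero_mem' := ⟨fun _ => 0, fun _ => le_rfl, by simp⟩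
      smul_mem' := by
        rintro c x ⟨l, hl, rfl⟩
        exact ⟨fun i => (c : ℝ) * l i, fun i => mul_nonneg c.2 (hl i), by
          rw [Finset.smul_sum]
          exact Finset.sum_congr rfl fun i _ => (smul_smul (c : ℝ) (l i) (vE i)).symm⟩
      isClosed' := hclosed }
  obtain ⟨y, hy1, hy2⟩ := P.hyperplane_separation' (x₀ := cE) hcK
  have hvy : ∀ i, 0 ≤ v i ⬝ᵥ (y : Fin k → ℝ) := by
    intro i
    have hmem : vE i ∈ K := by
      refine (hKmem (vE i)).mpr ⟨fun j => if j = i then 1 else 0, fun j => by positivity, ?_⟩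
      simp [ite_smul]
    have := hy1 (vE i) hmem
    rwa [inner_eq (vE i) y] at this
  have hcy := h y hvy
  rw [inner_eq cE y] at hy2
  exact absurd hcy (not_le.mpr hy2)

lemma aux_div {t p q : ℝ} (ht : 0 < t) : -t⁻¹ * p ≤ q ↔ 0 ≤ p + q * t := by
  have h : -t⁻¹ * p = -p / t := by field_simp
  rw [h, div_le_iff₀ ht]
  constructor <;> intro h' <;> linarith

lemma motzkin_key {m n : ℕ} {A : Matrix (Fin m) (Fin n) ℝ} {a : Fin m → ℝ} {c : Fin n → ℝ} {b : ℝ}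
    (hfeas : ∃ x : Fin n → ℝ, A.mulVec x ≤ a)
    (H : ∀ x : Fin n → ℝ, A.mulVec x ≤ a → c ⬝ᵥ x ≤ b)
    (x' : Fin n → ℝ) (t : ℝ) (ht : 0 ≤ t) (hrow : ∀ i, 0 ≤ A.mulVec x' i + a i * t) :
    0 ≤ c ⬝ᵥ x' + b * t := by
  rcases ht.lt_or_eq with ht | ht
  · by_contra hcon
    push_neg at hcon
    have hAx : A.mulVec ((-t⁻¹) • x') ≤ a := by
      intro i
      have h1 := hrow i
      have h2 : A.mulVec ((-t⁻¹) • x') i = -t⁻¹ * A.mulVec x' i := by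
        rw [Matrix.mulVec_smul]; simp
      rw [h2, aux_div ht]
      exact h1
    have h2 := H _ hAx
    have h3 : c ⬝ᵥ ((-t⁻¹) • x') = -t⁻¹ * (c ⬝ᵥ x') := by
      rw [dotProduct_smul]; simp
    rw [h3, aux_div ht] at h2
    linarith
  · by_contra hcon
    push_neg at hcon
    rcases hfeas with ⟨x₀, hx₀⟩
    have hd : c ⬝ᵥ x' < 0 := by rw [← ht] at hcon; simpa using hcon
    have hApos : ∀ i, 0 ≤ A.mulVec x' i := by
      intro i; have h1 := hrow i; rw [← ht] at h1; simpa using h1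
    set s := max 0 ((c ⬝ᵥ x₀ - b) / (c ⬝ᵥ x') + 1) with hs
    have hs0 : (0 : ℝ) ≤ s := le_max_left _ _
    have hsgt : (c ⬝ᵥ x₀ - b) / (c ⬝ᵥ x') < s :=
      lt_of_lt_of_le (lt_add_one _) (le_max_right _ _)
    have hfe : A.mulVec (x₀ - s • x') ≤ a := by
      intro i
      have h2 : A.mulVec (x₀ - s • x') i = A.mulVec x₀ i - s * A.mulVec x' i := by
        rw [Matrix.mulVec_sub, Matrix.mulVec_smul]; simp
      rw [h2]
      have h3 := mul_nonneg hs0 (hApos i)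
      have h4 := hx₀ i
      linarith
    have h5 := H _ hfe
    have hdot : c ⬝ᵥ (x₀ - s • x') = c ⬝ᵥ x₀ - s * (c ⬝ᵥ x') := by
      rw [dotProduct_sub, dotProduct_smul]; simp
    rw [hdot] at h5
    have h6 : s * (c ⬝ᵥ x') < ((c ⬝ᵥ x₀ - b) / (c ⬝ᵥ x')) * (c ⬝ᵥ x') :=
      mul_lt_mul_of_neg_right hsgt hd
    rw [div_mul_cancel₀ _ (ne_of_lt hd)] at h6
    linarith

/-- **Motzkin Transposition Theorem** (affine Farkas lemma for feasible systems).
If the system `A x ≤ a` is feasible, then `A x ≤ a` implies `cᵀ x ≤ b` for all `x`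
iff there is a componentwise-nonnegative `λ` with `Aᵀ λ = c` and `λᵀ a ≤ b`. -/
theorem motzkin_transposition {m n : ℕ}
    (A : Matrix (Fin m) (Fin n) ℝ) (a : Fin m → ℝ) (c : Fin n → ℝ) (b : ℝ)
    (hfeas : ∃ x : Fin n → ℝ, A.mulVec x ≤ a) :
    (∀ x : Fin n → ℝ, A.mulVec x ≤ a → c ⬝ᵥ x ≤ b) ↔
      ∃ lam : Fin m → ℝ, 0 ≤ lam ∧ Aᵀ.mulVec lam = c ∧ lam ⬝ᵥ a ≤ b := by
  constructor
  · intro H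
    have hyp : ∀ y : Fin (n + 1) → ℝ,
        (∀ i : Fin (m + 1), 0 ≤ (Fin.snoc (fun i => (Fin.snoc (A i) (a i) : Fin (n + 1) → ℝ))
          (Fin.snoc 0 1) : Fin (m + 1) → Fin (n + 1) → ℝ) i ⬝ᵥ y) →
        0 ≤ (Fin.snoc c b : Fin (n + 1) → ℝ) ⬝ᵥ y := by
      intro y hy
      have hA : ∀ i : Fin m, 0 ≤ A.mulVec (fun j => y j.castSucc) i + a i * y (Fin.last n) := by
        intro i
        have h1 := hy i.castSucc
        simpa [Fin.snoc_castSucc, dotProduct, Fin.sum_univ_castSucc, Matrix.mulVec] using h1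
      have ht : 0 ≤ y (Fin.last n) := by
        have h1 := hy (Fin.last m)
        simpa [Fin.snoc_last, dotProduct, Fin.sum_univ_castSucc] using h1
      have hk := motzkin_key hfeas H (fun j => y j.castSucc) (y (Fin.last n)) ht hA
      simpa [dotProduct, Fin.sum_univ_castSucc] using hk
    obtain ⟨l, hl, hsum⟩ := cone_farkas (k := n + 1) (m := m + 1)
      (Fin.snoc (fun i => (Fin.snoc (A i) (a i) : Fin (n + 1) → ℝ)) (Fin.snoc 0 1))
      (Fin.snoc c b) hyp
    refine ⟨fun i => l i.castSucc, Pi.le_def.mpr fun i => hl _, ?_, ?_⟩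
    · funext j
      have hj := congrFun hsum j.castSucc
      simp only [Finset.sum_apply, Pi.smul_apply, smul_eq_mul, Fin.sum_univ_castSucc,
        Fin.snoc_castSucc, Fin.snoc_last, Pi.zero_apply, mul_zero, add_zero] at hj
      simpa [Matrix.mulVec, dotProduct, Matrix.transpose_apply, mul_comm] using hj
    · have hlast := congrFun hsum (Fin.last n)
      simp only [Finset.sum_apply, Pi.smul_apply, smul_eq_mul, Fin.sum_univ_castSucc,
        Fin.snoc_castSucc, Fin.snoc_last, Pi.one_apply, mul_one] at hlast
      have h0 := hl (Fin.last m)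
      have hgoal : (fun i => l i.castSucc) ⬝ᵥ a = ∑ i : Fin m, l i.castSucc * a i := by
        simp [dotProduct]
      rw [hgoal]
      linarith
  · rintro ⟨lam, hlam, hAt, hab⟩ x hx
    have h1 : c ⬝ᵥ x = lam ⬝ᵥ A.mulVec x := by
      rw [← hAt, Matrix.mulVec_transpose, ← Matrix.dotProduct_mulVec]
    have h2 : lam ⬝ᵥ A.mulVec x ≤ lam ⬝ᵥ a :=
      Finset.sum_le_sum fun i _ => mul_le_mul_of_nonneg_left (hx i) (hlam i)
    linarith
end

section
/- For every positive integer k, the number of cyclic subgroups of (ℤ/kℤ)² of order exactly k equals the Dedekind psi function ψ(k) = k · ∏_{p prime, p ∣ k} (1 + 1/p). -/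
open Finset AddSubgroup ArithmeticFunction
open scoped ArithmeticFunction.Moebius

section CountingLemmas

variable {k : ℕ} [NeZero k]

omit [NeZero k] in
private lemma cyc2_squarefree_prod_primes {s : Finset ℕ} (hs : ∀ p ∈ s, p.Prime) :
    Squarefree (∏ p ∈ s, p) := by
  classical
  induction s using Finset.induction with
  | empty => simp
  | @insert p s hpns ih =>
    rw [Finset.prod_insert hpns]
    have hp' : p.Prime := hs p (Finset.mem_insert_self p s)
    have hco : Nat.Coprime p (∏ q ∈ s, q) :=
      Nat.Coprime.prod_right fun q hq =>
        (Nat.coprime_primes hp' (hs q (Finset.mem_insert_of_mem hq))).mpr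
          (fun h => hpns (h ▸ hq))
    rw [Nat.squarefree_mul hco]
    exact ⟨hp'.squarefree, ih fun q hq => hs q (Finset.mem_insert_of_mem hq)⟩

/-- The arithmetic function `d ↦ 1/d²`. -/
private def cyc2InvSq : ArithmeticFunction ℚ := ⟨fun d => ((d : ℚ)⁻¹) ^ 2, by simp⟩

private lemma cyc2InvSq_apply {d : ℕ} : cyc2InvSq d = ((d : ℚ)⁻¹) ^ 2 := rfl

private lemma cyc2InvSq_mult : cyc2InvSq.IsMultiplicative := by
  constructor
  · simp [cyc2InvSq_apply]
  · intro m n _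
    simp only [cyc2InvSq_apply]
    push_cast
    rw [mul_inv]
    ring

omit [NeZero k] in
private lemma cyc2_sum_moebius_invSq (hk : k ≠ 0) :
    ∑ d ∈ k.divisors, (μ d : ℚ) * ((d : ℚ)⁻¹) ^ 2
      = ∏ p ∈ k.primeFactors, (1 - ((p : ℚ)⁻¹) ^ 2) := by
  classical
  have hrad : Squarefree (∏ p ∈ k.primeFactors, p) :=
    cyc2_squarefree_prod_primes fun p hp => Nat.prime_of_mem_primeFactors hp
  have hpf : (∏ p ∈ k.primeFactors, p).primeFactors = k.primeFactors :=
    Nat.primeFactors_prod fun p hp => Nat.prime_of_mem_primeFactors hp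
  have key := cyc2InvSq_mult.prodPrimeFactors_one_sub_of_squarefree cyc2InvSq hrad
  rw [hpf] at key
  simp only [cyc2InvSq_apply] at key
  rw [key]
  have h1 : ∑ d ∈ k.divisors, (μ d : ℚ) * ((d : ℚ)⁻¹) ^ 2
      = ∑ d ∈ k.divisors with Squarefree d, (μ d : ℚ) * ((d : ℚ)⁻¹) ^ 2 := by
    rw [Finset.sum_filter_of_ne]
    intro d _ hd
    by_contra hsq
    rw [moebius_eq_zero_of_not_squarefree hsq] at hd
    simp at hd
  have h2 : {d ∈ k.divisors | Squarefree d} = (∏ p ∈ k.primeFactors, p).divisors := by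
    ext d
    simp only [Finset.mem_filter, Nat.mem_divisors]
    constructor
    · rintro ⟨⟨hdk, _⟩, hsq⟩
      refine ⟨?_, hrad.ne_zero⟩
      calc d = ∏ p ∈ d.primeFactors, p := (Nat.prod_primeFactors_of_squarefree hsq).symm
        _ ∣ ∏ p ∈ k.primeFactors, p :=
          Finset.prod_dvd_prod_of_subset _ _ _ (Nat.primeFactors_mono hdk hk)
    · rintro ⟨hd, _⟩
      exact ⟨⟨hd.trans (Nat.prod_primeFactors_dvd k), hk⟩, hrad.squarefree_of_dvd hd⟩
  rw [h1, h2]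

private lemma cyc2_torsion_set_eq {d : ℕ} (hd : d ∣ k) (hd0 : d ≠ 0) :
    {x : ZMod k | d • x = 0} = (zmultiples ((k / d : ℕ) : ZMod k) : Set (ZMod k)) := by
  have hk0 : k ≠ 0 := NeZero.ne k
  ext x
  simp only [Set.mem_setOf_eq, SetLike.mem_coe, mem_zmultiples_iff]
  constructor
  · intro hx
    have h1 : ((d * x.val : ℕ) : ZMod k) = 0 := by
      push_cast
      rw [ZMod.natCast_val, ZMod.cast_id]
      simpa [nsmul_eq_mul] using hx
    rw [ZMod.natCast_eq_zero_iff] at h1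
    have h2 : (k / d) ∣ x.val := by
      have h3 : d * (k / d) ∣ d * x.val := by
        rw [Nat.mul_div_cancel' hd]; exact h1
      exact (mul_dvd_mul_iff_left (a := d) (by exact_mod_cast hd0)).mp h3
    obtain ⟨m, hm⟩ := h2
    refine ⟨(m : ℤ), ?_⟩
    have hx2 : x = ((k / d * m : ℕ) : ZMod k) := by
      rw [← hm, ZMod.natCast_val, ZMod.cast_id]
    rw [hx2, zsmul_eq_mul]
    push_cast
    ring
  · rintro ⟨n, rfl⟩
    rw [smul_comm]
    have h0 : d • ((k / d : ℕ) : ZMod k) = 0 := by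
      rw [nsmul_eq_mul, ← Nat.cast_mul, Nat.mul_div_cancel' hd, ZMod.natCast_self]
    rw [h0, smul_zero]

private lemma cyc2_torsion_zmod_card {d : ℕ} (hd : d ∣ k) (hd0 : d ≠ 0) :
    Nat.card {x : ZMod k // d • x = 0} = d := by
  have hk0 : k ≠ 0 := NeZero.ne k
  have h1 : Nat.card {x : ZMod k // d • x = 0}
      = Nat.card (zmultiples ((k / d : ℕ) : ZMod k)) :=
    Nat.card_congr (Equiv.setCongr (cyc2_torsion_set_eq hd hd0))
  rw [h1, Nat.card_zmultiples, ZMod.addOrderOf_coe _ hk0,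
    Nat.gcd_eq_right (Nat.div_dvd_of_dvd hd), Nat.div_div_self hd hk0]

private lemma cyc2_torsion_prod_card {d : ℕ} (hd : d ∣ k) (hd0 : d ≠ 0) :
    Nat.card {v : ZMod k × ZMod k // d • v = 0} = d ^ 2 := by
  have e : {v : ZMod k × ZMod k // d • v = 0} ≃
      {x : ZMod k // d • x = 0} × {x : ZMod k // d • x = 0} :=
    { toFun := fun v => (⟨v.1.1, congrArg Prod.fst v.2⟩, ⟨v.1.2, congrArg Prod.snd v.2⟩)
      invFun := fun x => ⟨(x.1.1, x.2.1), Prod.ext x.1.2 x.2.2⟩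
      left_inv := fun v => rfl
      right_inv := fun x => rfl }
  rw [Nat.card_congr e, Nat.card_prod, cyc2_torsion_zmod_card hd hd0, sq]

private lemma cyc2_sum_card_orders {n : ℕ} (hn0 : 0 < n) (hn : n ∣ k) :
    ∑ i ∈ n.divisors, (Nat.card {v : ZMod k × ZMod k // addOrderOf v = i} : ℚ)
      = (n : ℚ) ^ 2 := by
  classical
  have h1 := sum_card_addOrderOf_eq_card_nsmul_eq_zero (G := ZMod k × ZMod k) hn0.ne'
  have h2 : (univ.filter fun v : ZMod k × ZMod k => n • v = 0).card
      = Nat.card {v : ZMod k × ZMod k // n • v = 0} := by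
    rw [Nat.card_eq_fintype_card, Fintype.card_subtype]
  rw [h2, cyc2_torsion_prod_card hn hn0.ne'] at h1
  have h3 : ∀ i, (Nat.card {v : ZMod k × ZMod k // addOrderOf v = i} : ℚ)
      = ((univ.filter fun v : ZMod k × ZMod k => addOrderOf v = i).card : ℚ) := by
    intro i; rw [Nat.card_eq_fintype_card, Fintype.card_subtype]
  simp_rw [h3]
  rw [← Nat.cast_sum, h1]
  push_cast
  ring

private lemma cyc2_card_order_eq_moebius :
    (Nat.card {v : ZMod k × ZMod k // addOrderOf v = k} : ℚ)
      = ∑ x ∈ k.divisorsAntidiagonal, (μ x.1 : ℚ) * (x.2 : ℚ) ^ 2 := by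
  have hk0 : 0 < k := Nat.pos_of_ne_zero (NeZero.ne k)
  exact ((sum_eq_iff_sum_mul_moebius_eq_on (R := ℚ)
    (f := fun i => (Nat.card {v : ZMod k × ZMod k // addOrderOf v = i} : ℚ))
    (g := fun n => (n : ℚ) ^ 2) {n | n ∣ k} (fun m n hmn hn => hmn.trans hn)).mp
    (fun n hn hnk => cyc2_sum_card_orders hn hnk) k hk0 dvd_rfl).symm

private lemma cyc2_card_order_formula :
    (Nat.card {v : ZMod k × ZMod k // addOrderOf v = k} : ℚ)
      = (k : ℚ) ^ 2 * ∏ p ∈ k.primeFactors, (1 - ((p : ℚ)⁻¹) ^ 2) := by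
  have hk0 : k ≠ 0 := NeZero.ne k
  rw [cyc2_card_order_eq_moebius,
    Nat.sum_divisorsAntidiagonal (fun d e => (μ d : ℚ) * (e : ℚ) ^ 2)]
  rw [← cyc2_sum_moebius_invSq hk0, Finset.mul_sum]
  apply Finset.sum_congr rfl
  intro d hd
  obtain ⟨hdk, _⟩ := Nat.mem_divisors.mp hd
  have hd0 : (d : ℚ) ≠ 0 :=
    Nat.cast_ne_zero.mpr (Nat.pos_of_mem_divisors hd).ne'
  rw [Nat.cast_div hdk hd0]
  field_simp

omit [NeZero k] in
private lemma cyc2_isAddCyclic_zmultiples (v : ZMod k × ZMod k) :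
    IsAddCyclic (zmultiples v) := by
  refine ⟨⟨⟨v, mem_zmultiples v⟩, fun x => ?_⟩⟩
  obtain ⟨x, hx⟩ := x
  obtain ⟨n, hn⟩ := hx
  exact ⟨n, Subtype.ext (by simpa using hn)⟩

private lemma cyc2_fiber_card (H : AddSubgroup (ZMod k × ZMod k))
    (hH : ∃ v, H = zmultiples v) (hcard : Nat.card H = k) :
    Nat.card {t : {v : ZMod k × ZMod k // addOrderOf v = k} // zmultiples t.1 = H}
      = Nat.totient k := by
  classical
  have e : {t : {v : ZMod k × ZMod k // addOrderOf v = k} // zmultiples t.1 = H}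
      ≃ {h : H // addOrderOf h = k} :=
    { toFun := fun t => ⟨⟨t.1.1, t.2.le (mem_zmultiples t.1.1)⟩,
        by rw [AddSubgroup.addOrderOf_mk]; exact t.1.2⟩
      invFun := fun h => ⟨⟨h.1.1, by rw [AddSubgroup.addOrderOf_coe]; exact h.2⟩, by
        refine AddSubgroup.eq_of_le_of_card_ge (zmultiples_le.mpr h.1.2) ?_
        rw [Nat.card_zmultiples, AddSubgroup.addOrderOf_coe, h.2, hcard]⟩
      left_inv := fun t => rfl
      right_inv := fun h => rfl }
  rw [Nat.card_congr e]
  obtain ⟨v, rfl⟩ := hH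
  haveI : IsAddCyclic (zmultiples v) := cyc2_isAddCyclic_zmultiples v
  have hk : k ∣ Fintype.card (zmultiples v) := by
    rw [← Nat.card_eq_fintype_card, hcard]
  have := IsAddCyclic.card_addOrderOf_eq_totient (α := zmultiples v) (d := k) hk
  rw [Nat.card_eq_fintype_card, Fintype.card_subtype]
  exact this

private lemma cyc2_card_order_k_eq :
    Nat.card {v : ZMod k × ZMod k // addOrderOf v = k}
      = Nat.card {H : AddSubgroup (ZMod k × ZMod k) //
          (∃ v : ZMod k × ZMod k, H = zmultiples v) ∧ Nat.card H = k}
        * Nat.totient k := by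
  classical
  haveI : Finite (AddSubgroup (ZMod k × ZMod k)) :=
    Finite.of_injective (fun H => (H : Set (ZMod k × ZMod k))) SetLike.coe_injective
  set S := {H : AddSubgroup (ZMod k × ZMod k) //
      (∃ v : ZMod k × ZMod k, H = zmultiples v) ∧ Nat.card H = k} with hS
  haveI : Fintype S := Fintype.ofFinite S
  let f : {v : ZMod k × ZMod k // addOrderOf v = k} → S := fun t =>
    ⟨zmultiples t.1, ⟨t.1, rfl⟩, by rw [Nat.card_zmultiples]; exact t.2⟩
  have h1 : Nat.card {v : ZMod k × ZMod k // addOrderOf v = k}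
      = ∑ H : S, Nat.card {t // f t = H} := by
    rw [Nat.card_congr (Equiv.sigmaFiberEquiv f).symm, Nat.card_eq_fintype_card,
      Fintype.card_sigma]
    simp [Nat.card_eq_fintype_card]
  rw [h1]
  have h2 : ∀ H : S, Nat.card {t // f t = H} = Nat.totient k := by
    intro H
    have heq : ∀ t, f t = H ↔ zmultiples t.1 = H.1 := by
      intro t
      constructor
      · intro h; rw [← h]
      · intro h; exact Subtype.ext h
    rw [Nat.card_congr (Equiv.subtypeEquivRight heq)]
    exact cyc2_fiber_card H.1 H.2.1 H.2.2
  simp_rw [h2]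
  rw [Finset.sum_const, card_univ, smul_eq_mul, Nat.card_eq_fintype_card]

end CountingLemmas

/-- The number of cyclic subgroups of order exactly `k` of `(ℤ/kℤ)²` equals the
Dedekind psi function `ψ(k) = k ∏_{p ∣ k prime} (1 + 1/p)`. -/
theorem count_cyclic_subgroups_rank_two (k : ℕ) (hk : 0 < k) :
    (Nat.card {H : AddSubgroup (ZMod k × ZMod k) //
        (∃ v : ZMod k × ZMod k, H = AddSubgroup.zmultiples v) ∧ Nat.card H = k} : ℚ)
      = (k : ℚ) * ∏ p ∈ k.primeFactors, (1 + 1 / (p : ℚ)) := by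
  haveI : NeZero k := ⟨hk.ne'⟩
  have hA := cyc2_card_order_k_eq (k := k)
  have hB := cyc2_card_order_formula (k := k)
  have hphi : (Nat.totient k : ℚ) = k * ∏ p ∈ k.primeFactors, (1 - (p : ℚ)⁻¹) :=
    Nat.totient_eq_mul_prod_factors k
  have hphi0 : (Nat.totient k : ℚ) ≠ 0 :=
    Nat.cast_ne_zero.mpr (Nat.totient_pos.mpr hk).ne'
  have hprod : ((Nat.totient k : ℚ)) * ((k : ℚ) * ∏ p ∈ k.primeFactors, (1 + 1 / (p : ℚ)))
      = (k : ℚ) ^ 2 * ∏ p ∈ k.primeFactors, (1 - ((p : ℚ)⁻¹) ^ 2) := by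
    rw [hphi]
    rw [mul_mul_mul_comm, ← Finset.prod_mul_distrib, ← sq]
    congr 1
    apply Finset.prod_congr rfl
    intro p _
    rw [one_div]
    ring
  have hcast : (Nat.card {v : ZMod k × ZMod k // addOrderOf v = k} : ℚ)
      = (Nat.card {H : AddSubgroup (ZMod k × ZMod k) //
          (∃ v : ZMod k × ZMod k, H = AddSubgroup.zmultiples v) ∧ Nat.card H = k} : ℚ)
        * (Nat.totient k : ℚ) := by
    rw [hA]; push_cast; ring
  have := hcast.symm.trans hB
  rw [← hprod] at this
  have h2 : (Nat.totient k : ℚ)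
        * (Nat.card {H : AddSubgroup (ZMod k × ZMod k) //
          (∃ v : ZMod k × ZMod k, H = AddSubgroup.zmultiples v) ∧ Nat.card H = k} : ℚ)
      = (Nat.totient k : ℚ) * ((k : ℚ) * ∏ p ∈ k.primeFactors, (1 + 1 / (p : ℚ))) := by
    rw [← this]; ring
  exact mul_left_cancel₀ hphi0 h2
end

section
/- For every positive integer k, the number of cyclic subgroups of (ℤ/kℤ)³ of order exactly k equals the generalized Dedekind psi function Ψ₃(k) = k² · ∏_{p prime, p ∣ k} (1 + 1/p + 1/p²). -/
open Finset AddSubgroup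

lemma L1 (k d : ℕ) (hk : 0 < k) (hd : d ∣ k) :
    Nat.card {x : ZMod k // d • x = 0} = d := by
  haveI : NeZero k := ⟨hk.ne'⟩
  set f : ZMod k →+ ZMod k := zsmulAddGroupHom d with hf
  have hker : ∀ x : ZMod k, x ∈ f.ker ↔ d • x = 0 := by
    intro x
    simp [hf, zsmulAddGroupHom, AddMonoidHom.mem_ker, natCast_zsmul]
  have hrange : f.range = zmultiples ((d : ZMod k)) := by
    have h1 : zmultiples ((1 : ZMod k)) = ⊤ := by
      apply AddSubgroup.eq_top_of_card_eq
      rw [Nat.card_zmultiples, ZMod.addOrderOf_one, Nat.card_zmod]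
    rw [AddMonoidHom.range_eq_map, ← h1, AddMonoidHom.map_zmultiples]
    congr 1
    simp [hf, zsmulAddGroupHom]
  have hcrange : Nat.card f.range = k / d := by
    rw [hrange]
    have : ((d : ℕ) : ZMod k) = ((d : ℕ) : ZMod k) := rfl
    rw [Nat.card_zmultiples, ZMod.addOrderOf_coe d hk.ne', Nat.gcd_eq_right hd]
  have htot := AddSubgroup.card_eq_card_quotient_mul_card_addSubgroup f.ker
  rw [Nat.card_congr (QuotientAddGroup.quotientKerEquivRange f).toEquiv, hcrange,
    Nat.card_zmod] at htot
  have : Nat.card {x : ZMod k // d • x = 0} = Nat.card f.ker := by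
    apply Nat.card_congr
    exact Equiv.subtypeEquivRight fun x => (hker x).symm
  rw [this]
  have hdpos : 0 < d := Nat.pos_of_dvd_of_pos hd hk
  obtain ⟨c, hc⟩ := hd
  have hcpos : 0 < c := by
    rcases Nat.eq_zero_or_pos c with h | h
    · subst h; simp [hc] at hk
    · exact h
  have hc' : k / d = c := by rw [hc]; exact Nat.mul_div_cancel_left c hdpos
  rw [hc'] at htot
  have h2 : c * Nat.card f.ker = c * d := by rw [← htot, hc, mul_comm]
  rw [Nat.eq_of_mul_eq_mul_left hcpos h2]

lemma L2 (k d : ℕ) (hk : 0 < k) (hd : d ∣ k) :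
    Nat.card {v : ZMod k × ZMod k × ZMod k // d • v = 0} = d ^ 3 := by
  have e1 : {v : ZMod k × ZMod k × ZMod k // d • v = 0} ≃
      {x : ZMod k // d • x = 0} × {w : ZMod k × ZMod k // d • w = 0} :=
    (Equiv.subtypeEquivRight (by intro v; simp [Prod.ext_iff])).trans
      (Equiv.subtypeProdEquivProd)
  have e2 : {w : ZMod k × ZMod k // d • w = 0} ≃
      {x : ZMod k // d • x = 0} × {x : ZMod k // d • x = 0} :=
    (Equiv.subtypeEquivRight (by intro v; simp [Prod.ext_iff])).trans
      (Equiv.subtypeProdEquivProd)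
  rw [Nat.card_congr e1, Nat.card_prod, Nat.card_congr e2, Nat.card_prod, L1 k d hk hd]
  ring

lemma L3 (k n : ℕ) (hk : 0 < k) (hn : 0 < n) (hnk : n ∣ k) :
    ∑ i ∈ n.divisors, Nat.card {v : ZMod k × ZMod k × ZMod k // addOrderOf v = i}
      = n ^ 3 := by
  classical
  haveI : NeZero k := ⟨hk.ne'⟩
  rw [← L2 k n hk hnk]
  have hcard : ∀ i : ℕ, Nat.card {v : ZMod k × ZMod k × ZMod k // addOrderOf v = i}
      = (univ.filter (fun v : ZMod k × ZMod k × ZMod k => addOrderOf v = i)).card := by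
    intro i; rw [Nat.card_eq_fintype_card, Fintype.card_subtype]
  have hcard2 : Nat.card {v : ZMod k × ZMod k × ZMod k // n • v = 0}
      = (univ.filter (fun v : ZMod k × ZMod k × ZMod k => addOrderOf v ∣ n)).card := by
    rw [Nat.card_eq_fintype_card, Fintype.card_subtype]
    congr 1; ext v; simp [addOrderOf_dvd_iff_nsmul_eq_zero]
  rw [hcard2]
  rw [Finset.card_eq_sum_card_fiberwise
    (f := fun v : ZMod k × ZMod k × ZMod k => addOrderOf v) (t := n.divisors) ?_]
  · apply Finset.sum_congr rfl
    intro i hi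
    rw [hcard i]
    congr 1
    ext v
    simp only [Finset.mem_filter, Finset.mem_univ, true_and]
    exact ⟨fun h => ⟨h ▸ Nat.dvd_of_mem_divisors hi, h⟩, fun h => h.2⟩
  · intro v hv
    simp only [Finset.mem_coe, Finset.mem_filter, Finset.mem_univ, true_and] at hv
    exact Nat.mem_divisors.mpr ⟨hv, hn.ne'⟩

open ArithmeticFunction ArithmeticFunction.Moebius in
lemma L4 (k : ℕ) (hk : 0 < k) :
    (Nat.card {v : ZMod k × ZMod k × ZMod k // addOrderOf v = k} : ℚ)
      = ∑ x ∈ k.divisorsAntidiagonal, (μ x.1 : ℚ) • ((x.2 : ℚ) ^ 3) := by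
  have := (ArithmeticFunction.sum_eq_iff_sum_smul_moebius_eq_on (R := ℚ)
    (f := fun i => (Nat.card {v : ZMod k × ZMod k × ZMod k // addOrderOf v = i} : ℚ))
    (g := fun n => (n : ℚ) ^ 3) {d | d ∣ k} (fun m n hmn hn => hmn.trans hn)).mp ?_ k hk dvd_rfl
  · rw [← this]
    apply Finset.sum_congr rfl
    intro x hx
    simp [zsmul_eq_mul]
  · intro n hn hnk
    rw [show ((n:ℚ)^3) = ((n^3 : ℕ) : ℚ) by push_cast; ring, ← L3 k n hk hn hnk]
    push_cast
    rfl

open ArithmeticFunction ArithmeticFunction.Moebius in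
lemma L6 (k : ℕ) (hk : 0 < k) :
    ∑ a ∈ k.divisors, (μ a : ℚ) * (1 / (a : ℚ) ^ 3)
      = ∏ p ∈ k.primeFactors, (1 - 1 / (p : ℚ) ^ 3) := by
  classical
  rw [← Finset.sum_filter_of_ne (p := Squarefree)
    (fun a _ ha => moebius_ne_zero_iff_squarefree.mp (by
      intro h; apply ha; rw [h]; push_cast; ring))]
  rw [Nat.sum_divisors_filter_squarefree hk.ne', Nat.factors_eq]
  have hPF : (k.primeFactorsList : Multiset ℕ).toFinset = k.primeFactors := rfl
  rw [hPF]
  have : ∀ p : ℕ, (1 : ℚ) - 1 / (p:ℚ)^3 = (-(1/(p:ℚ)^3)) + 1 := by intro p; ring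
  simp only [this]
  rw [Finset.prod_add]
  apply Finset.sum_congr rfl
  intro t ht
  rw [Finset.mem_powerset] at ht
  rw [Finset.prod_val, Function.id_def,
    isMultiplicative_moebius.map_prod_of_subset_primeFactors k t ht]
  rw [Finset.prod_const_one, mul_one]
  have hprim : ∀ p ∈ t, (p : ℚ) ≠ 0 := by
    intro p hp
    exact_mod_cast (Nat.prime_of_mem_primeFactors (ht hp)).ne_zero
  have h1 : ∀ i ∈ t, ((μ i : ℤ) : ℚ) = -1 := fun p hp => by
    rw [moebius_apply_prime (Nat.prime_of_mem_primeFactors (ht hp))]; norm_num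
  push_cast
  rw [Finset.prod_congr rfl h1]
  have h2 : ∀ i ∈ t, -(1 / (i:ℚ)^3) = (-1) * (1/(i:ℚ)^3) := fun i _ => by ring
  rw [Finset.prod_congr rfl h2, Finset.prod_mul_distrib]
  congr 1
  rw [one_div, ← Finset.prod_pow, ← Finset.prod_inv_distrib]
  exact Finset.prod_congr rfl fun i _ => by rw [one_div]

open ArithmeticFunction ArithmeticFunction.Moebius in
lemma L7 (k : ℕ) (hk : 0 < k) :
    (Nat.card {v : ZMod k × ZMod k × ZMod k // addOrderOf v = k} : ℚ)
      = (k : ℚ) ^ 3 * ∏ p ∈ k.primeFactors, (1 - 1 / (p : ℚ) ^ 3) := by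
  rw [L4 k hk, Nat.sum_divisorsAntidiagonal (f := fun a b => (μ a : ℚ) • ((b : ℚ) ^ 3)),
    ← L6 k hk, Finset.mul_sum]
  apply Finset.sum_congr rfl
  intro a ha
  have ha' := Nat.mem_divisors.mp ha
  have ha0 : (a : ℚ) ≠ 0 := by
    exact_mod_cast (Nat.pos_of_mem_divisors ha).ne'
  rw [Nat.cast_div ha'.1 ha0, smul_eq_mul]
  field_simp

lemma cyc_zmultiples {G : Type*} [AddGroup G] (v : G) :
    IsAddCyclic (AddSubgroup.zmultiples v) := by
  refine ⟨⟨⟨v, AddSubgroup.mem_zmultiples v⟩, fun x => ?_⟩⟩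
  obtain ⟨n, hn⟩ := x.2
  exact ⟨n, Subtype.ext (by simpa using hn)⟩

lemma L8 (k : ℕ) (hk : 0 < k) :
    Nat.card {H : AddSubgroup (ZMod k × ZMod k × ZMod k) //
        (∃ v : ZMod k × ZMod k × ZMod k, H = AddSubgroup.zmultiples v) ∧
          Nat.card H = k} * k.totient
      = Nat.card {v : ZMod k × ZMod k × ZMod k // addOrderOf v = k} := by
  classical
  haveI : NeZero k := ⟨hk.ne'⟩
  set G := ZMod k × ZMod k × ZMod k
  haveI : Finite (AddSubgroup G) :=
    Finite.of_injective (fun H : AddSubgroup G => (H : Set G)) SetLike.coe_injective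
  haveI := Fintype.ofFinite (AddSubgroup G)
  set P : AddSubgroup G → Prop :=
    fun H => (∃ v : G, H = AddSubgroup.zmultiples v) ∧ Nat.card H = k with hP
  rw [Nat.card_eq_fintype_card, Nat.card_eq_fintype_card, Fintype.card_subtype,
    Fintype.card_subtype]
  rw [Finset.card_eq_sum_card_fiberwise
    (f := fun v : G => AddSubgroup.zmultiples v)
    (t := Finset.univ.filter P) ?_]
  · rw [Finset.sum_congr rfl (g := fun _ => k.totient) ?_, Finset.sum_const, smul_eq_mul]
    intro H hH
    simp only [Finset.mem_filter, Finset.mem_univ, true_and, hP] at hH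
    obtain ⟨⟨v₀, rfl⟩, hcard⟩ := hH
    -- fiber over H equals elements of H of order k
    have hfib : (Finset.univ.filter (fun v : G => addOrderOf v = k)).filter
        (fun v => AddSubgroup.zmultiples v = AddSubgroup.zmultiples v₀)
        = Finset.univ.filter
            (fun v : G => v ∈ AddSubgroup.zmultiples v₀ ∧ addOrderOf v = k) := by
      ext v
      simp only [Finset.mem_filter, Finset.mem_univ, true_and]
      constructor
      · rintro ⟨hord, hzm⟩
        exact ⟨hzm ▸ AddSubgroup.mem_zmultiples v, hord⟩
      · rintro ⟨hmem, hord⟩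
        refine ⟨hord, ?_⟩
        apply AddSubgroup.eq_of_le_of_card_ge
        · rwa [AddSubgroup.zmultiples_le]
        · rw [Nat.card_zmultiples v, hord, hcard]
    rw [hfib]
    haveI : IsAddCyclic (AddSubgroup.zmultiples v₀) := cyc_zmultiples v₀
    have hFc : Fintype.card (AddSubgroup.zmultiples v₀) = k := by
      rw [← Nat.card_eq_fintype_card, hcard]
    have htot := IsAddCyclic.card_addOrderOf_eq_totient
      (α := AddSubgroup.zmultiples v₀) (d := k) (by rw [hFc])
    calc (Finset.univ.filter
        (fun v : G => v ∈ AddSubgroup.zmultiples v₀ ∧ addOrderOf v = k)).card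
        = Fintype.card {v : G // v ∈ AddSubgroup.zmultiples v₀ ∧ addOrderOf v = k} :=
          (Fintype.card_subtype _).symm
      _ = Fintype.card {x : AddSubgroup.zmultiples v₀ // addOrderOf (x : G) = k} :=
          (Fintype.card_congr (Equiv.subtypeSubtypeEquivSubtypeInter _ _)).symm
      _ = (Finset.univ.filter
            (fun x : AddSubgroup.zmultiples v₀ => addOrderOf x = k)).card := by
          rw [Fintype.card_subtype]
          congr 1; ext x
          simp [AddSubgroup.addOrderOf_coe]
      _ = k.totient := by
          rw [← htot]
  · intro v hv
    simp only [Finset.mem_coe, Finset.mem_filter, Finset.mem_univ, true_and, hP] at hv ⊢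
    exact ⟨⟨v, rfl⟩, by rw [Nat.card_zmultiples, hv]⟩

/-- The number of cyclic subgroups of order exactly `k` of `(ℤ/kℤ)³` equals the
generalized Dedekind psi function `Ψ₃(k) = k² ∏_{p ∣ k prime} (1 + 1/p + 1/p²)`. -/
theorem count_cyclic_subgroups_rank_three (k : ℕ) (hk : 0 < k) :
    (Nat.card {H : AddSubgroup (ZMod k × ZMod k × ZMod k) //
        (∃ v : ZMod k × ZMod k × ZMod k, H = AddSubgroup.zmultiples v) ∧
          Nat.card H = k} : ℚ)
      = (k : ℚ) ^ 2 * ∏ p ∈ k.primeFactors, (1 + 1 / (p : ℚ) + 1 / (p : ℚ) ^ 2) := by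
  have hφ' : ((k.totient : ℚ)) ≠ 0 := by
    exact_mod_cast (Nat.totient_pos.mpr hk).ne'
  apply mul_right_cancel₀ hφ'
  have hp0 : ∀ p ∈ k.primeFactors, (p : ℚ) ≠ 0 := fun p hp => by
    exact_mod_cast (Nat.prime_of_mem_primeFactors hp).ne_zero
  calc (Nat.card {H : AddSubgroup (ZMod k × ZMod k × ZMod k) //
        (∃ v : ZMod k × ZMod k × ZMod k, H = AddSubgroup.zmultiples v) ∧
          Nat.card H = k} : ℚ) * (k.totient : ℚ)
      = ((Nat.card {H : AddSubgroup (ZMod k × ZMod k × ZMod k) //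
        (∃ v : ZMod k × ZMod k × ZMod k, H = AddSubgroup.zmultiples v) ∧
          Nat.card H = k} * k.totient : ℕ) : ℚ) := by push_cast; ring
    _ = (Nat.card {v : ZMod k × ZMod k × ZMod k // addOrderOf v = k} : ℚ) := by
        rw [L8 k hk]
    _ = (k : ℚ) ^ 3 * ∏ p ∈ k.primeFactors, (1 - 1 / (p : ℚ) ^ 3) := L7 k hk
    _ = (k : ℚ) ^ 2 * (∏ p ∈ k.primeFactors, (1 + 1 / (p : ℚ) + 1 / (p : ℚ) ^ 2))
          * (k.totient : ℚ) := by
        rw [Nat.totient_eq_mul_prod_factors]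
        rw [show ∀ A B : ℚ, (k:ℚ)^2 * A * ((k:ℚ) * B) = (k:ℚ)^3 * (A * B) from
          fun A B => by ring, ← Finset.prod_mul_distrib]
        congr 1
        apply Finset.prod_congr rfl
        intro p hp
        have := hp0 p hp
        field_simp
        ring
end

section
/- For every real μ with 0 < μ < 1, the two-dimensional Lebesgue measure of the region {(N, k) ∈ ℝ² : 1 ≤ N ≤ μ^{−5/3}, 1 ≤ k ≤ μ^{−5/2} N^{−3/2}} equals 2μ^{−5/2} − 3μ^{−5/3} + 1; in particular this measure is asymptotic to 2μ^{−5/2} as μ → 0⁺. -/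
open MeasureTheory Filter Real

/-- The region of discrete data `(N, k)` of AdS₇ × S⁴/ℤ__k vacua allowed by the
cutoff `μ`, in the continuum approximation. -/
def ads7Region (μ : ℝ) : Set (ℝ × ℝ) :=
  {p : ℝ × ℝ | 1 ≤ p.1 ∧ p.1 ≤ μ ^ (-(5 : ℝ) / 3) ∧
    1 ≤ p.2 ∧ p.2 ≤ μ ^ (-(5 : ℝ) / 2) * p.1 ^ (-(3 : ℝ) / 2)}

lemma ads7_area_formula (μ : ℝ) (hμ0 : 0 < μ) (hμ1 : μ < 1) :
    (volume (ads7Region μ)).toReal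
      = 2 * μ ^ (-(5 : ℝ) / 2) - 3 * μ ^ (-(5 : ℝ) / 3) + 1 := by
  set A : ℝ := μ ^ (-(5 : ℝ) / 3) with hA
  set c : ℝ := μ ^ (-(5 : ℝ) / 2) with hc
  have hA1 : (1 : ℝ) ≤ A :=
    Real.one_le_rpow_of_pos_of_le_one_of_nonpos hμ0 hμ1.le (by norm_num)
  have hApos : 0 < A := lt_of_lt_of_le one_pos hA1
  have hcA : c * A ^ (-(3 : ℝ) / 2) = 1 := by
    rw [hA, ← Real.rpow_mul hμ0.le, hc, ← Real.rpow_add hμ0]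
    norm_num
  have hcg : ∀ x ∈ Set.Icc (1 : ℝ) A, 1 ≤ c * x ^ (-(3 : ℝ) / 2) := by
    intro x hx
    have hx0 : (0 : ℝ) < x := lt_of_lt_of_le one_pos hx.1
    have h1 : A ^ (-(3 : ℝ) / 2) ≤ x ^ (-(3 : ℝ) / 2) :=
      Real.rpow_le_rpow_of_nonpos hx0 hx.2 (by norm_num)
    have hc0 : 0 < c := Real.rpow_pos_of_pos hμ0 _
    nlinarith [hcA]
  have hmeas : MeasurableSet (ads7Region μ) := by
    apply MeasurableSet.inter (measurableSet_le measurable_const measurable_fst)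
    apply MeasurableSet.inter (measurableSet_le measurable_fst measurable_const)
    apply MeasurableSet.inter (measurableSet_le measurable_const measurable_snd)
    exact measurableSet_le measurable_snd
      ((measurable_fst.pow_const _).const_mul c)
  have hslice : ∀ x : ℝ, Prod.mk x ⁻¹' ads7Region μ
      = if x ∈ Set.Icc (1 : ℝ) A then Set.Icc 1 (c * x ^ (-(3 : ℝ) / 2)) else ∅ := by
    intro x
    split_ifs with hx
    · ext y
      simp only [ads7Region, Set.mem_preimage, Set.mem_setOf_eq, Set.mem_Icc]
      exact ⟨fun h => ⟨h.2.2.1, h.2.2.2⟩, fun h => ⟨hx.1, hx.2, h.1, h.2⟩⟩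
    · ext y
      simp only [ads7Region, Set.mem_preimage, Set.mem_setOf_eq, Set.mem_empty_iff_false,
        iff_false]
      rw [Set.mem_Icc, not_and_or] at hx
      tauto
  have hvol : volume (ads7Region μ)
      = ∫⁻ x in Set.Icc (1 : ℝ) A, ENNReal.ofReal (c * x ^ (-(3 : ℝ) / 2) - 1) := by
    rw [show (volume : Measure (ℝ × ℝ)) = Measure.prod volume volume from rfl,
      Measure.prod_apply hmeas, ← lintegral_indicator measurableSet_Icc]
    congr 1
    ext x
    rw [hslice x]
    by_cases hx : x ∈ Set.Icc (1 : ℝ) A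
    · rw [Set.indicator_of_mem hx, if_pos hx, Real.volume_Icc]
    · rw [Set.indicator_of_notMem hx, if_neg hx]
      simp
  have hcont : ContinuousOn (fun x : ℝ => c * x ^ (-(3 : ℝ) / 2) - 1)
      (Set.Icc (1 : ℝ) A) := by
    apply ContinuousOn.sub _ continuousOn_const
    apply ContinuousOn.mul continuousOn_const
    intro x hx
    exact (Real.continuousAt_rpow_const x _
      (Or.inl (ne_of_gt (lt_of_lt_of_le one_pos hx.1)))).continuousWithinAt
  have hint : IntegrableOn (fun x : ℝ => c * x ^ (-(3 : ℝ) / 2) - 1)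
      (Set.Icc (1 : ℝ) A) := hcont.integrableOn_compact isCompact_Icc
  have hnn : ∀ x ∈ Set.Icc (1 : ℝ) A, 0 ≤ c * x ^ (-(3 : ℝ) / 2) - 1 := by
    intro x hx; linarith [hcg x hx]
  have hvol2 : volume (ads7Region μ)
      = ENNReal.ofReal (∫ x in Set.Icc (1 : ℝ) A, (c * x ^ (-(3 : ℝ) / 2) - 1)) := by
    rw [hvol, ← MeasureTheory.ofReal_integral_eq_lintegral_ofReal hint
      ((ae_restrict_iff' measurableSet_Icc).2 (Filter.Eventually.of_forall hnn))]
  have hIval : ∫ x in Set.Icc (1 : ℝ) A, (c * x ^ (-(3 : ℝ) / 2) - 1)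
      = 2 * c - 3 * A + 1 := by
    rw [MeasureTheory.integral_Icc_eq_integral_Ioc,
      ← intervalIntegral.integral_of_le hA1]
    have h0 : (0 : ℝ) ∉ Set.uIcc (1 : ℝ) A := by
      rw [Set.uIcc_of_le hA1]
      intro h
      exact absurd h.1 (by norm_num)
    have hint1 : IntervalIntegrable (fun x : ℝ => c * x ^ (-(3 : ℝ) / 2)) volume 1 A := by
      apply ContinuousOn.intervalIntegrable
      apply ContinuousOn.mul continuousOn_const
      intro x hx
      rw [Set.uIcc_of_le hA1] at hx
      exact (Real.continuousAt_rpow_const x _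
        (Or.inl (ne_of_gt (lt_of_lt_of_le one_pos hx.1)))).continuousWithinAt
    rw [intervalIntegral.integral_sub hint1 intervalIntegrable_const,
      intervalIntegral.integral_const_mul, integral_rpow (Or.inr ⟨by norm_num, h0⟩)]
    have hA12 : A ^ (-(3 : ℝ) / 2 + 1) = μ ^ ((5 : ℝ) / 6) := by
      rw [hA, ← Real.rpow_mul hμ0.le]
      norm_num
    have hcA2 : c * μ ^ ((5 : ℝ) / 6) = A := by
      rw [hc, ← Real.rpow_add hμ0, hA]
      norm_num
    rw [hA12, Real.one_rpow]
    rw [intervalIntegral.integral_const, smul_eq_mul, mul_one]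
    linear_combination (-2 : ℝ) * hcA2
  have hnneg : (0 : ℝ) ≤ 2 * c - 3 * A + 1 := by
    have h := setIntegral_nonneg (μ := volume) measurableSet_Icc hnn
    rwa [hIval] at h
  rw [hvol2, hIval, ENNReal.toReal_ofReal hnneg]

/-- For `0 < μ < 1` the Lebesgue area of the region
`{(N,k) : 1 ≤ N ≤ μ^{−5/3}, 1 ≤ k ≤ μ^{−5/2} N^{−3/2}}` equals
`2 μ^{−5/2} − 3 μ^{−5/3} + 1`; in particular it is asymptotic to `2 μ^{−5/2}`
as `μ → 0⁺`. -/
theorem ads7_region_area :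
    (∀ μ : ℝ, 0 < μ → μ < 1 →
      (volume (ads7Region μ)).toReal
        = 2 * μ ^ (-(5 : ℝ) / 2) - 3 * μ ^ (-(5 : ℝ) / 3) + 1)
    ∧ Tendsto (fun μ : ℝ => (volume (ads7Region μ)).toReal / (2 * μ ^ (-(5 : ℝ) / 2)))
        (nhdsWithin 0 (Set.Ioi 0)) (nhds 1) := by
  refine ⟨fun μ hμ0 hμ1 => ads7_area_formula μ hμ0 hμ1, ?_⟩
  have heq : ∀ᶠ μ : ℝ in nhdsWithin 0 (Set.Ioi 0),
      (volume (ads7Region μ)).toReal / (2 * μ ^ (-(5 : ℝ) / 2))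
        = 1 - 3 / 2 * μ ^ ((5 : ℝ) / 6) + 1 / 2 * μ ^ ((5 : ℝ) / 2) := by
    filter_upwards [Ioo_mem_nhdsGT_of_mem (by norm_num : (0 : ℝ) ∈ Set.Ico (0:ℝ) 1)]
      with μ hμ
    obtain ⟨hμ0, hμ1⟩ := hμ
    rw [ads7_area_formula μ hμ0 hμ1]
    have hc0 : (0 : ℝ) < μ ^ (-(5 : ℝ) / 2) := Real.rpow_pos_of_pos hμ0 _
    have h1 : μ ^ (-(5 : ℝ) / 3) = μ ^ (-(5 : ℝ) / 2) * μ ^ ((5 : ℝ) / 6) := by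
      rw [← Real.rpow_add hμ0]; norm_num
    have h2 : μ ^ (-(5 : ℝ) / 2) * μ ^ ((5 : ℝ) / 2) = 1 := by
      rw [← Real.rpow_add hμ0]; norm_num
    field_simp
    nlinarith [h2]
  refine Tendsto.congr' (Filter.EventuallyEq.symm heq) ?_
  have hr : ∀ q : ℝ, 0 < q → Tendsto (fun μ : ℝ => μ ^ q) (nhdsWithin 0 (Set.Ioi 0))
      (nhds 0) := by
    intro q hq
    have := (Real.continuousAt_rpow_const 0 q (Or.inr hq.le)).tendsto
    rw [Real.zero_rpow (ne_of_gt hq)] at this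
    exact this.mono_left nhdsWithin_le_nhds
  have : Tendsto (fun μ : ℝ => 1 - 3 / 2 * μ ^ ((5 : ℝ) / 6) + 1 / 2 * μ ^ ((5 : ℝ) / 2))
      (nhdsWithin 0 (Set.Ioi 0)) (nhds (1 - 3 / 2 * 0 + 1 / 2 * 0)) := by
    exact ((tendsto_const_nhds.sub ((hr _ (by norm_num)).const_mul _)).add
      ((hr _ (by norm_num)).const_mul _))
  simpa using this
end

section
/- For every integer p ≥ 1 and every real q ≥ p, the integral over the ordered simplex {(s₁,…,s_p) : 1 ≥ s₁ ≥ s₂ ≥ ⋯ ≥ s_p ≥ 0} of the function ∏_{i=1}^{p} s_i^{q−p} · ∏_{1 ≤ i < j ≤ p} (s_i² − s_j²) is nonnegative and at most (q − p + 1)^{−p}; in particular, for fixed p it is O(q^{−p}) as q → ∞. -/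
open MeasureTheory Filter Asymptotics

/-- The ordered simplex `{1 ≥ s₁ ≥ s₂ ≥ ⋯ ≥ s_p ≥ 0}` in `ℝ^p`. -/
def orderedSimplex (p : ℕ) : Set (Fin p → ℝ) :=
  {s | (∀ i : Fin p, 0 ≤ s i ∧ s i ≤ 1) ∧ ∀ i j : Fin p, i ≤ j → s j ≤ s i}

/-- The rescaled radial Jacobian integral
`∫_{1 ≥ s₁ ≥ ⋯ ≥ s_p ≥ 0} ∏_i s_i^{q−p} ∏_{i<j} (s_i² − s_j²) ds`. -/
noncomputable def simplexIntegral (p : ℕ) (q : ℝ) : ℝ :=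
  ∫ s in orderedSimplex p,
    (∏ i : Fin p, s i ^ (q - (p : ℝ))) *
      ∏ i : Fin p, ∏ j ∈ Finset.Ioi i, ((s i) ^ 2 - (s j) ^ 2)

lemma orderedSimplex_measurable (p : ℕ) : MeasurableSet (orderedSimplex p) := by
  have : orderedSimplex p =
      (⋂ i : Fin p, {s : Fin p → ℝ | 0 ≤ s i} ∩ {s | s i ≤ 1}) ∩
        ⋂ i : Fin p, ⋂ j : Fin p, ⋂ (_ : i ≤ j), {s : Fin p → ℝ | s j ≤ s i} := by
    ext s
    simp only [orderedSimplex, Set.mem_setOf_eq, Set.mem_inter_iff, Set.mem_iInter,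
      Set.mem_setOf_eq]
  rw [this]
  exact (MeasurableSet.iInter fun i =>
      (measurableSet_le measurable_const (measurable_pi_apply i)).inter
        (measurableSet_le (measurable_pi_apply i) measurable_const)).inter
    (MeasurableSet.iInter fun i => MeasurableSet.iInter fun j => MeasurableSet.iInter fun _ =>
      measurableSet_le (measurable_pi_apply j) (measurable_pi_apply i))

lemma cube_integral (p : ℕ) (c : ℝ) (hc : 0 ≤ c) :
    ∫ s in Set.Icc (0 : Fin p → ℝ) 1, ∏ i : Fin p, s i ^ c = (1 / (c + 1)) ^ p := by
  have h1 : ∫ x in Set.Icc (0:ℝ) 1, x ^ c = 1 / (c + 1) := by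
    rw [MeasureTheory.integral_Icc_eq_integral_Ioc, ← intervalIntegral.integral_of_le zero_le_one,
      integral_rpow (Or.inl (by linarith))]
    rw [Real.one_rpow, Real.zero_rpow (by positivity)]
    ring
  have hIcc : Set.Icc (0 : Fin p → ℝ) 1 = Set.univ.pi fun _ : Fin p => Set.Icc (0:ℝ) 1 := by
    rw [Set.pi_univ_Icc]; rfl
  calc ∫ s in Set.Icc (0 : Fin p → ℝ) 1, ∏ i : Fin p, s i ^ c
      = ∫ s : Fin p → ℝ, ∏ i : Fin p,
          Set.indicator (Set.Icc (0:ℝ) 1) (fun x => x ^ c) (s i) := by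
        rw [← MeasureTheory.integral_indicator measurableSet_Icc]
        congr 1
        ext s
        rw [hIcc]
        by_cases hs : s ∈ Set.univ.pi fun _ : Fin p => Set.Icc (0:ℝ) 1
        · rw [Set.indicator_of_mem hs]
          refine Finset.prod_congr rfl fun i _ => ?_
          rw [Set.indicator_of_mem (hs i (Set.mem_univ i))]
        · rw [Set.indicator_of_notMem hs]
          simp only [Set.mem_pi, Set.mem_univ, forall_true_left, not_forall, true_implies] at hs
          obtain ⟨i, hi⟩ := hs
          exact (Finset.prod_eq_zero (Finset.mem_univ i)
            (by rw [Set.indicator_of_notMem hi])).symm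
    _ = (∫ x : ℝ, Set.indicator (Set.Icc (0:ℝ) 1) (fun x => x ^ c) x) ^ p := by
        rw [MeasureTheory.integral_fintype_prod_volume_eq_pow (ι := Fin p)
          (Set.indicator (Set.Icc (0:ℝ) 1) (fun x => x ^ c))]
        simp
    _ = (1 / (c + 1)) ^ p := by
        rw [MeasureTheory.integral_indicator measurableSet_Icc, h1]

lemma simplex_integral_le (p : ℕ) (q : ℝ) (hq : (p : ℝ) ≤ q) :
    0 ≤ simplexIntegral p q ∧ simplexIntegral p q ≤ (1 / (q - p + 1)) ^ p := by
  set c : ℝ := q - p with hc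
  have hc0 : 0 ≤ c := by simp [hc]; linarith
  set g : (Fin p → ℝ) → ℝ := fun s => ∏ i : Fin p, s i ^ c with hg
  set f : (Fin p → ℝ) → ℝ := fun s =>
    (∏ i : Fin p, s i ^ c) * ∏ i : Fin p, ∏ j ∈ Finset.Ioi i, ((s i) ^ 2 - (s j) ^ 2) with hf
  have hms := orderedSimplex_measurable p
  -- f nonneg on simplex
  have hf0 : ∀ s ∈ orderedSimplex p, 0 ≤ f s := by
    intro s hs
    obtain ⟨h01, hord⟩ := hs
    apply mul_nonneg
    · exact Finset.prod_nonneg fun i _ => Real.rpow_nonneg (h01 i).1 _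
    · refine Finset.prod_nonneg fun i _ => Finset.prod_nonneg fun j hj => ?_
      have hij : i ≤ j := le_of_lt (Finset.mem_Ioi.mp hj)
      have := pow_le_pow_left₀ (h01 j).1 (hord i j hij) 2
      linarith
  have hg0 : ∀ s ∈ orderedSimplex p, 0 ≤ g s := fun s hs =>
    Finset.prod_nonneg fun i _ => Real.rpow_nonneg (hs.1 i).1 _
  have hg1 : ∀ s ∈ Set.Icc (0 : Fin p → ℝ) 1, g s ≤ 1 := by
    intro s hs
    exact Finset.prod_le_one (fun i _ => Real.rpow_nonneg (hs.1 i) _)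
      (fun i _ => Real.rpow_le_one (hs.1 i) (hs.2 i) hc0)
  have hg0' : ∀ s ∈ Set.Icc (0 : Fin p → ℝ) 1, 0 ≤ g s := fun s hs =>
    Finset.prod_nonneg fun i _ => Real.rpow_nonneg (hs.1 i) _
  have hsub : orderedSimplex p ⊆ Set.Icc (0 : Fin p → ℝ) 1 := by
    intro s hs
    exact ⟨fun i => (hs.1 i).1, fun i => (hs.1 i).2⟩
  -- f ≤ g on simplex
  have hfg : ∀ s ∈ orderedSimplex p, f s ≤ g s := by
    intro s hs
    obtain ⟨h01, hord⟩ := hs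
    have hB : (∏ i : Fin p, ∏ j ∈ Finset.Ioi i, ((s i) ^ 2 - (s j) ^ 2)) ≤ 1 := by
      refine Finset.prod_le_one (fun i _ => Finset.prod_nonneg fun j hj => ?_)
        (fun i _ => Finset.prod_le_one (fun j hj => ?_) (fun j hj => ?_))
      · have hij : i ≤ j := le_of_lt (Finset.mem_Ioi.mp hj)
        have := pow_le_pow_left₀ (h01 j).1 (hord i j hij) 2
        linarith
      · have hij : i ≤ j := le_of_lt (Finset.mem_Ioi.mp hj)
        have := pow_le_pow_left₀ (h01 j).1 (hord i j hij) 2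
        linarith
      · have h1 : (s i) ^ 2 ≤ 1 := pow_le_one₀ (h01 i).1 (h01 i).2
        have h2 : 0 ≤ (s j) ^ 2 := sq_nonneg _
        linarith
    calc f s ≤ g s * 1 := by
          rw [hf, hg]
          exact mul_le_mul_of_nonneg_left hB
            (Finset.prod_nonneg fun i _ => Real.rpow_nonneg (h01 i).1 _)
      _ = g s := mul_one _
  -- g measurable
  have hgm : Measurable g := by
    rw [hg]; measurability
  -- g integrable on cube
  have hcube : MeasurableSet (Set.Icc (0 : Fin p → ℝ) 1) := measurableSet_Icc
  have hvol : volume (Set.Icc (0 : Fin p → ℝ) 1) ≠ ⊤ :=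
    (isCompact_Icc.measure_lt_top).ne
  have hgi : IntegrableOn g (Set.Icc (0 : Fin p → ℝ) 1) := by
    apply Measure.integrableOn_of_bounded (M := 1) hvol (hgm.aestronglyMeasurable)
    filter_upwards [ae_restrict_mem hcube] with s hs
    rw [Real.norm_eq_abs, abs_of_nonneg (hg0' s hs)]
    exact hg1 s hs
  have hgi' : IntegrableOn g (orderedSimplex p) := hgi.mono_set hsub
  constructor
  · exact setIntegral_nonneg hms hf0
  · have step1 : simplexIntegral p q ≤ ∫ s in orderedSimplex p, g s := by
      apply integral_mono_of_nonneg
      · filter_upwards [ae_restrict_mem hms] with s hs using hf0 s hs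
      · exact hgi'
      · filter_upwards [ae_restrict_mem hms] with s hs using hfg s hs
    have step2 : (∫ s in orderedSimplex p, g s) ≤ ∫ s in Set.Icc (0 : Fin p → ℝ) 1, g s := by
      apply setIntegral_mono_set hgi
      · filter_upwards [ae_restrict_mem hcube] with s hs using hg0' s hs
      · exact HasSubset.Subset.eventuallyLE hsub
    have step3 : (∫ s in Set.Icc (0 : Fin p → ℝ) 1, g s) = (1 / (c + 1)) ^ p :=
      cube_integral p c hc0
    calc simplexIntegral p q ≤ _ := step1
      _ ≤ _ := step2
      _ = (1 / (q - p + 1)) ^ p := step3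

/-- For every `p ≥ 1` and real `q ≥ p`, the simplex integral is nonnegative and at
most `(q − p + 1)^{−p}`; in particular, for fixed `p` it is `O(q^{−p})` as `q → ∞`. -/
theorem simplex_integral_bounds (p : ℕ) (hp : 1 ≤ p) :
    (∀ q : ℝ, (p : ℝ) ≤ q →
      0 ≤ simplexIntegral p q ∧
        simplexIntegral p q ≤ (q - (p : ℝ) + 1) ^ (-(p : ℝ)))
    ∧ (fun q : ℝ => simplexIntegral p q) =O[atTop] fun q : ℝ => q ^ (-(p : ℝ)) := by
  have key : ∀ q : ℝ, (p : ℝ) ≤ q →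
      0 ≤ simplexIntegral p q ∧
        simplexIntegral p q ≤ (q - (p : ℝ) + 1) ^ (-(p : ℝ)) := by
    intro q hq
    obtain ⟨h0, h1⟩ := simplex_integral_le p q hq
    refine ⟨h0, h1.trans_eq ?_⟩
    have hpos : (0:ℝ) < q - p + 1 := by linarith
    rw [Real.rpow_neg hpos.le, Real.rpow_natCast, one_div, inv_pow]
  refine ⟨key, ?_⟩
  rw [isBigO_iff]
  refine ⟨2 ^ p, ?_⟩
  filter_upwards [eventually_ge_atTop (2 * (p:ℝ)), eventually_gt_atTop (0:ℝ)] with q hq hq0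
  have hqp : (p:ℝ) ≤ q := by
    have : (0:ℝ) ≤ p := Nat.cast_nonneg p
    linarith
  obtain ⟨h0, h1⟩ := key q hqp
  have h2 : (q - (p:ℝ) + 1) ^ (-(p:ℝ)) ≤ (q / 2) ^ (-(p:ℝ)) := by
    apply Real.rpow_le_rpow_of_nonpos (by linarith) (by linarith)
    simp [Nat.cast_nonneg]
  have h3 : (q / 2 : ℝ) ^ (-(p:ℝ)) = 2 ^ p * q ^ (-(p:ℝ)) := by
    rw [Real.div_rpow hq0.le (by norm_num), Real.rpow_neg (by norm_num : (0:ℝ) ≤ 2),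
      Real.rpow_natCast]
    field_simp
  rw [Real.norm_eq_abs, Real.norm_eq_abs, abs_of_nonneg h0,
    abs_of_nonneg (Real.rpow_nonneg hq0.le _)]
  calc simplexIntegral p q ≤ _ := h1
    _ ≤ (q/2) ^ (-(p:ℝ)) := h2
    _ = 2 ^ p * q ^ (-(p:ℝ)) := h3
end

section
/- For 0 < μ < 1 let S_μ = {(N, k₁, k₂, k₃) ∈ ℝ⁴ : N ≥ 1, 1 ≤ k₃ ≤ k₂ ≤ k₁, N³ k₁ k₂ k₃ ≤ μ^{−4}, N (k₁ k₂)³ ≤ μ^{−4} k₃} and let I(μ) = ∫_{S_μ} k₁² k₂ k₃ dN dk₁ dk₂ dk₃. Then lim_{μ→0⁺} (log I(μ)) / (log(1/μ)) = 28/5. -/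
open MeasureTheory Filter Real
open scoped ENNReal

/-- The region of `(N, k₁, k₂, k₃)` for M-theory vacua
`AdS₄ × S⁷/(ℤ_{k₁}×ℤ_{k₂}×ℤ_{k₃})` allowed by the cutoff `μ`. -/
def ads4Region (μ : ℝ) : Set (ℝ × ℝ × ℝ × ℝ) :=
  {x | 1 ≤ x.1 ∧ 1 ≤ x.2.2.2 ∧ x.2.2.2 ≤ x.2.2.1 ∧ x.2.2.1 ≤ x.2.1 ∧
    x.1 ^ 3 * x.2.1 * x.2.2.1 * x.2.2.2 ≤ μ ^ (-(4 : ℝ)) ∧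
    x.1 * (x.2.1 * x.2.2.1) ^ 3 ≤ μ ^ (-(4 : ℝ)) * x.2.2.2}

/-- The weighted count `I(μ) = ∫_{S_μ} k₁² k₂ k₃ dN dk₁ dk₂ dk₃`. -/
noncomputable def ads4Count (μ : ℝ) : ℝ :=
  ∫ x in ads4Region μ, x.2.1 ^ 2 * x.2.2.1 * x.2.2.2

namespace Ads4Aux

/-- The integrand. -/
noncomputable def f : ℝ × ℝ × ℝ × ℝ → ℝ := fun x => x.2.1 ^ 2 * x.2.2.1 * x.2.2.2

lemma f_cont : Continuous f := by unfold f; fun_prop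

lemma f_meas : Measurable f := f_cont.measurable

/-- The region with abstract cutoff `T`. -/
def regionT (T : ℝ) : Set (ℝ × ℝ × ℝ × ℝ) :=
  {x | 1 ≤ x.1 ∧ 1 ≤ x.2.2.2 ∧ x.2.2.2 ≤ x.2.2.1 ∧ x.2.2.1 ≤ x.2.1 ∧
    x.1 ^ 3 * x.2.1 * x.2.2.1 * x.2.2.2 ≤ T ∧
    x.1 * (x.2.1 * x.2.2.1) ^ 3 ≤ T * x.2.2.2}

lemma region_eq (μ : ℝ) : ads4Region μ = regionT (μ ^ (-(4:ℝ))) := rfl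

lemma measurable_proj1 : Measurable fun x : ℝ × ℝ × ℝ × ℝ => x.1 := measurable_fst
lemma measurable_proj2 : Measurable fun x : ℝ × ℝ × ℝ × ℝ => x.2.1 :=
  measurable_fst.comp measurable_snd
lemma measurable_proj3 : Measurable fun x : ℝ × ℝ × ℝ × ℝ => x.2.2.1 :=
  (measurable_fst.comp measurable_snd).comp measurable_snd
lemma measurable_proj4 : Measurable fun x : ℝ × ℝ × ℝ × ℝ => x.2.2.2 :=
  (measurable_snd.comp measurable_snd).comp measurable_snd

lemma measurableSet_regionT (T : ℝ) : MeasurableSet (regionT T) := by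
  unfold regionT
  refine MeasurableSet.inter ?_ (MeasurableSet.inter ?_ (MeasurableSet.inter ?_
    (MeasurableSet.inter ?_ (MeasurableSet.inter ?_ ?_))))
  · exact measurableSet_le measurable_const measurable_proj1
  · exact measurableSet_le measurable_const measurable_proj4
  · exact measurableSet_le measurable_proj4 measurable_proj3
  · exact measurableSet_le measurable_proj3 measurable_proj2
  · exact measurableSet_le
      (((measurable_proj1.pow_const 3).mul measurable_proj2).mul measurable_proj3
        |>.mul measurable_proj4) measurable_const
  · exact measurableSet_le
      (measurable_proj1.mul ((measurable_proj2.mul measurable_proj3).pow_const 3))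
      (measurable_const.mul measurable_proj4)

/-- The lintegral version of the count. -/
noncomputable def LT (T : ℝ) : ℝ≥0∞ :=
  ∫⁻ x in regionT T, ENNReal.ofReal (f x)

lemma count_eq (μ : ℝ) : ads4Count μ = (LT (μ ^ (-(4:ℝ)))).toReal := by
  have hnn : 0 ≤ᵐ[volume.restrict (regionT (μ ^ (-(4:ℝ))))] f := by
    refine (ae_restrict_iff' (measurableSet_regionT _)).2 (Filter.Eventually.of_forall ?_)
    rintro x ⟨hN, hk3, hk32, hk21, -, -⟩
    simp only [Pi.zero_apply]
    unfold f
    have h4 : (0:ℝ) ≤ x.2.2.2 := le_trans zero_le_one hk3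
    exact mul_nonneg (mul_nonneg (pow_nonneg (by linarith) 2) (by linarith)) h4
  have := integral_eq_lintegral_of_nonneg_ae hnn (f_cont.aestronglyMeasurable.restrict)
  rw [ads4Count, region_eq]
  simpa [LT, f] using this
end Ads4Aux
namespace Ads4Aux
set_option maxHeartbeats 1000000

/-- Lower bound on the lintegral count. -/
lemma lower_T (T : ℝ) (hT : (2:ℝ) ^ (32:ℕ) ≤ T) :
    ENNReal.ofReal (T ^ ((7:ℝ)/5) / 2 ^ (34:ℕ)) ≤ LT T := by
  have hT0 : (0:ℝ) < T := lt_of_lt_of_le (by norm_num) hT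
  have hT1 : (1:ℝ) ≤ T := le_trans (by norm_num) hT
  obtain ⟨c, hcdef⟩ : ∃ c : ℝ, c = T ^ ((1:ℝ)/5) / 16 := ⟨_, rfl⟩
  have hr0 : (0:ℝ) < T ^ ((1:ℝ)/5) := Real.rpow_pos_of_pos hT0 _
  have hc0 : (0:ℝ) < c := by rw [hcdef]; positivity
  have hc4 : (4:ℝ) ≤ c := by
    have h645 : ((64:ℝ) ^ (5:ℕ)) ≤ T := le_trans (by norm_num) hT
    have h2 : ((64:ℝ) ^ (5:ℕ)) ^ ((1:ℝ)/5) ≤ T ^ ((1:ℝ)/5) :=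
      Real.rpow_le_rpow (by positivity) h645 (by norm_num)
    rw [← Real.rpow_natCast (64:ℝ) 5, ← Real.rpow_mul (by norm_num : (0:ℝ) ≤ 64)] at h2
    norm_num at h2
    rw [hcdef]; linarith
  have hpow : ∀ n : ℕ, c ^ (n:ℕ) = T ^ ((n:ℝ)/5) / 16 ^ (n:ℕ) := by
    intro n
    rw [hcdef, div_pow, ← Real.rpow_natCast (T ^ ((1:ℝ)/5)) n, ← Real.rpow_mul hT0.le,
      mul_comm, mul_one_div]
  have hc5 : c ^ (5:ℕ) = T / 16 ^ (5:ℕ) := by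
    have := hpow 5
    norm_num at this
    rw [this]; norm_num
  have hc3 : c ^ (3:ℕ) = T ^ ((3:ℝ)/5) / 16 ^ (3:ℕ) := by
    have := hpow 3; norm_num at this; rw [this]; norm_num
  have hc7 : c ^ (7:ℕ) = T ^ ((7:ℝ)/5) / 16 ^ (7:ℕ) := by
    have := hpow 7; norm_num at this; rw [this]; norm_num
  have hT35 : T ^ ((3:ℝ)/5) ≤ T := by
    calc T ^ ((3:ℝ)/5) ≤ T ^ (1:ℝ) := Real.rpow_le_rpow_of_exponent_le hT1 (by norm_num)
    _ = T := Real.rpow_one T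
  have hBsub : Set.Icc 1 2 ×ˢ (Set.Icc c (2*c) ×ˢ (Set.Icc (c/2) c ×ˢ Set.Icc (c/4) (c/2)))
      ⊆ regionT T := by
    rintro ⟨N, k1, k2, k3⟩ ⟨⟨hN1, hN2⟩, ⟨hk1l, hk1u⟩, ⟨hk2l, hk2u⟩, ⟨hk3l, hk3u⟩⟩
    dsimp only at hN1 hN2 hk1l hk1u hk2l hk2u hk3l hk3u
    show 1 ≤ N ∧ 1 ≤ k3 ∧ k3 ≤ k2 ∧ k2 ≤ k1 ∧ N ^ 3 * k1 * k2 * k3 ≤ T ∧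
      N * (k1 * k2) ^ 3 ≤ T * k3
    refine ⟨hN1, by linarith, by linarith, by linarith, ?_, ?_⟩
    · -- N^3 k1 k2 k3 ≤ T
      have m1 : N ^ 3 ≤ 8 := by
        calc N ^ 3 ≤ 2 ^ 3 := pow_le_pow_left₀ (by linarith) hN2 3
        _ = 8 := by norm_num
      have m2 : N ^ 3 * k1 ≤ 8 * (2*c) := by
        refine mul_le_mul m1 hk1u (by linarith) (by norm_num)
      have m3 : N ^ 3 * k1 * k2 ≤ 8 * (2*c) * c :=
        mul_le_mul m2 hk2u (by linarith) (by nlinarith)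
      have m4 : N ^ 3 * k1 * k2 * k3 ≤ 8 * (2*c) * c * (c/2) :=
        mul_le_mul m3 hk3u (by linarith) (by nlinarith)
      have m5 : (8:ℝ) * (2*c) * c * (c/2) = 8 * c ^ (3:ℕ) := by ring
      have hr35 : (0:ℝ) ≤ T ^ ((3:ℝ)/5) := by positivity
      have m6 : (8:ℝ) * c ^ (3:ℕ) ≤ T := by
        rw [hc3]
        have : (8:ℝ) * (T ^ ((3:ℝ)/5) / 16 ^ (3:ℕ)) = T ^ ((3:ℝ)/5) * (8/4096) := by ring
        rw [this]
        nlinarith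
      linarith [m5 ▸ m4]
    · -- N (k1 k2)^3 ≤ T k3
      have h00 : (0:ℝ) ≤ k1 * k2 := by nlinarith
      have h0 : k1 * k2 ≤ 2 * c * c := by nlinarith
      have h1 : (k1 * k2) ^ 3 ≤ (2 * c * c) ^ 3 := pow_le_pow_left₀ h00 h0 3
      have h2 : N * (k1 * k2) ^ 3 ≤ 2 * (2 * c * c) ^ 3 :=
        mul_le_mul hN2 h1 (pow_nonneg h00 3) (by norm_num)
      have h3 : (2:ℝ) * (2 * c * c) ^ 3 = 16 * (c ^ (5:ℕ) * c) := by ring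
      have h4 : (16:ℝ) * (c ^ (5:ℕ) * c) ≤ T * (c/4) := by
        rw [hc5]
        have e : (16:ℝ) * (T / 16 ^ (5:ℕ) * c) = T * c * (1/65536) := by ring
        rw [e]
        nlinarith
      have h5 : T * (c/4) ≤ T * k3 := by nlinarith
      linarith [h3 ▸ h2]
  -- volume of the box
  have hvol : volume (Set.Icc (1:ℝ) 2 ×ˢ (Set.Icc c (2*c) ×ˢ (Set.Icc (c/2) c ×ˢ
      Set.Icc (c/4) (c/2)))) = ENNReal.ofReal 1 * (ENNReal.ofReal c *
      (ENNReal.ofReal (c/2) * ENNReal.ofReal (c/4))) := by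
    rw [MeasureTheory.Measure.volume_eq_prod, MeasureTheory.Measure.prod_prod,
      MeasureTheory.Measure.volume_eq_prod, MeasureTheory.Measure.prod_prod,
      MeasureTheory.Measure.volume_eq_prod, MeasureTheory.Measure.prod_prod,
      Real.volume_Icc, Real.volume_Icc, Real.volume_Icc, Real.volume_Icc]
    congr 1
    · norm_num
    congr 1
    · congr 1; ring
    congr 1
    · congr 1; ring
    · congr 1; ring
  calc ENNReal.ofReal (T ^ ((7:ℝ)/5) / 2 ^ (34:ℕ))
      = ENNReal.ofReal (c ^ (4:ℕ) / 8) * volume (Set.Icc (1:ℝ) 2 ×ˢ (Set.Icc c (2*c) ×ˢ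
        (Set.Icc (c/2) c ×ˢ Set.Icc (c/4) (c/2)))) := by
        rw [hvol, ← ENNReal.ofReal_mul (by positivity), ← ENNReal.ofReal_mul (by positivity),
          ← ENNReal.ofReal_mul (by positivity), ← ENNReal.ofReal_mul (by positivity)]
        congr 1
        have e : c ^ (4:ℕ) / 8 * (1 * (c * (c / 2 * (c / 4)))) = c ^ (7:ℕ) / 64 := by ring
        rw [e, hc7, div_div]
        norm_num
    _ ≤ ∫⁻ x in Set.Icc (1:ℝ) 2 ×ˢ (Set.Icc c (2*c) ×ˢ (Set.Icc (c/2) c ×ˢ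
        Set.Icc (c/4) (c/2))), ENNReal.ofReal (f x) := by
        rw [← setLIntegral_const]
        refine setLIntegral_mono (f_meas.ennreal_ofReal) ?_
        rintro ⟨N, k1, k2, k3⟩ ⟨⟨hN1, hN2⟩, ⟨hk1l, hk1u⟩, ⟨hk2l, hk2u⟩, ⟨hk3l, hk3u⟩⟩
        dsimp only at hN1 hN2 hk1l hk1u hk2l hk2u hk3l hk3u
        refine ENNReal.ofReal_le_ofReal ?_
        show c ^ (4:ℕ) / 8 ≤ k1 ^ 2 * k2 * k3
        have hc0' : (0:ℝ) < c := by linarith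
        have h1 : c ^ 2 ≤ k1 ^ 2 := by nlinarith
        have h2 : c^2*(c/2) ≤ k1^2*k2 :=
          mul_le_mul h1 hk2l (by linarith) (pow_nonneg (by linarith) 2)
        have h3 : (c^2*(c/2))*(c/4) ≤ (k1^2*k2)*k3 :=
          mul_le_mul h2 hk3l (by linarith)
            (mul_nonneg (pow_nonneg (by linarith) 2) (by linarith))
        nlinarith [h3]
    _ ≤ LT T := lintegral_mono_set hBsub

end Ads4Aux
namespace Ads4Aux

/-- Enlarged region with separated constraints, for the upper bound. -/
def US (T : ℝ) : Set (ℝ × ℝ × ℝ × ℝ) :=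
  {x | 1 ≤ x.1 ∧ 1 ≤ x.2.1 ∧ x.2.1 ^ 2 ≤ T ∧ 1 ≤ x.2.2.2 ∧ x.2.2.2 ≤ x.2.2.1 ∧
    x.2.2.1 ≤ x.2.1 ∧ x.1 * x.2.2.1 ^ 5 ≤ T ∧ x.1 * x.2.1 ^ 3 * x.2.2.1 ^ 2 ≤ T}

lemma measurableSet_US (T : ℝ) : MeasurableSet (US T) := by
  unfold US
  refine MeasurableSet.inter ?_ (MeasurableSet.inter ?_ (MeasurableSet.inter ?_
    (MeasurableSet.inter ?_ (MeasurableSet.inter ?_ (MeasurableSet.inter ?_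
    (MeasurableSet.inter ?_ ?_))))))
  · exact measurableSet_le measurable_const measurable_proj1
  · exact measurableSet_le measurable_const measurable_proj2
  · exact measurableSet_le (measurable_proj2.pow_const 2) measurable_const
  · exact measurableSet_le measurable_const measurable_proj4
  · exact measurableSet_le measurable_proj4 measurable_proj3
  · exact measurableSet_le measurable_proj3 measurable_proj2
  · exact measurableSet_le (measurable_proj1.mul (measurable_proj3.pow_const 5))
      measurable_const
  · exact measurableSet_le ((measurable_proj1.mul (measurable_proj2.pow_const 3)).mul
      (measurable_proj3.pow_const 2)) measurable_const

noncomputable def W (T : ℝ) : ℝ × ℝ × ℝ × ℝ → ℝ≥0∞ :=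
  (US T).indicator fun x => ENNReal.ofReal (f x)

lemma W_meas (T : ℝ) : Measurable (W T) :=
  (f_meas.ennreal_ofReal).indicator (measurableSet_US T)

lemma region_subset_US (T : ℝ) (hT1 : (1:ℝ) ≤ T) : regionT T ⊆ US T := by
  rintro ⟨N, k1, k2, k3⟩ ⟨hN, hk3, h32, h21, hA, hB⟩
  dsimp only at hN hk3 h32 h21 hA hB ⊢
  have hk2 : (1:ℝ) ≤ k2 := le_trans hk3 h32
  have hk1 : (1:ℝ) ≤ k1 := le_trans hk2 h21
  have hT0 : (0:ℝ) < T := lt_of_lt_of_le zero_lt_one hT1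
  have hk23 : (1:ℝ) ≤ k2 ^ 3 := one_le_pow₀ hk2
  have e1 : k1 ^ 3 ≤ N * (k1 * k2) ^ 3 := by
    have hh : N * (k1 * k2) ^ 3 = k1 ^ 3 * (N * k2 ^ 3) := by ring
    have h1 : (1:ℝ) ≤ N * k2 ^ 3 := by nlinarith
    have h2 : k1 ^ 3 * 1 ≤ k1 ^ 3 * (N * k2 ^ 3) :=
      mul_le_mul_of_nonneg_left h1 (by positivity)
    rw [hh]; linarith
  have e2 : T * k3 ≤ T * k1 := mul_le_mul_of_nonneg_left (le_trans h32 h21) hT0.le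
  have e3 : k1 ^ 3 ≤ T * k1 := le_trans e1 (le_trans hB e2)
  have ek1 : k1 ^ 2 ≤ T := by nlinarith
  have e2' : T * k3 ≤ T * k2 := mul_le_mul_of_nonneg_left h32 hT0.le
  have hBk2 : N * (k1 * k2) ^ 3 ≤ T * k2 := le_trans hB e2'
  have f1 : k2 ^ 3 ≤ k1 ^ 3 := pow_le_pow_left₀ (by linarith) h21 3
  have ek2 : N * k2 ^ 5 ≤ T := by
    have g1 : (N * k2 ^ 5) * k2 = N * (k2 ^ 3 * k2 ^ 3) := by ring
    have g2 : N * (k2 ^ 3 * k2 ^ 3) ≤ N * (k1 ^ 3 * k2 ^ 3) := by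
      refine mul_le_mul_of_nonneg_left ?_ (by linarith)
      exact mul_le_mul_of_nonneg_right f1 (by positivity)
    have g3 : N * (k1 ^ 3 * k2 ^ 3) = N * (k1 * k2) ^ 3 := by ring
    have : (N * k2 ^ 5) * k2 ≤ T * k2 := by
      rw [g1]; exact le_trans g2 (g3 ▸ hBk2)
    exact le_of_mul_le_mul_right this (by linarith)
  have ek12 : N * k1 ^ 3 * k2 ^ 2 ≤ T := by
    have g1 : (N * k1 ^ 3 * k2 ^ 2) * k2 = N * (k1 * k2) ^ 3 := by ring
    have : (N * k1 ^ 3 * k2 ^ 2) * k2 ≤ T * k2 := by rw [g1]; exact hBk2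
    exact le_of_mul_le_mul_right this (by linarith)
  exact ⟨hN, hk1, ek1, hk3, h32, h21, ek2, ek12⟩

/-- Conditions surviving after integrating out `k₃`. -/
def C2 (T : ℝ) : Set (ℝ × ℝ × ℝ) :=
  {p | 1 ≤ p.1 ∧ 1 ≤ p.2.1 ∧ p.2.1 ^ 2 ≤ T ∧ 1 ≤ p.2.2 ∧ p.2.2 ≤ p.2.1 ∧
    p.1 * p.2.2 ^ 5 ≤ T ∧ p.1 * p.2.1 ^ 3 * p.2.2 ^ 2 ≤ T}

noncomputable def V2 (T : ℝ) : ℝ × ℝ × ℝ → ℝ≥0∞ :=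
  (C2 T).indicator fun p => ENNReal.ofReal (p.2.1 ^ 2 * p.2.2 ^ 3)

def C1 (T : ℝ) : Set (ℝ × ℝ) := {p | 1 ≤ p.1 ∧ 1 ≤ p.2 ∧ p.2 ^ 2 ≤ T}

noncomputable def V1 (T : ℝ) : ℝ × ℝ → ℝ≥0∞ :=
  (C1 T).indicator fun p => ENNReal.ofReal ((T / p.1) ^ ((2:ℝ)/5) * (T / p.1) * p.2⁻¹)

noncomputable def V0 (T : ℝ) : ℝ → ℝ≥0∞ :=
  (Set.Ici (1:ℝ)).indicator fun N =>
    ENNReal.ofReal ((T / N) ^ ((2:ℝ)/5) * (T / N) * (Real.log T / 2))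

lemma B3 (T : ℝ) (N k1 k2 : ℝ) :
    ∫⁻ k3, W T (N, (k1, (k2, k3))) ≤ V2 T (N, (k1, k2)) := by
  by_cases hC : (N, (k1, k2)) ∈ C2 T
  · have hC' := hC
    obtain ⟨hN, hk1, hk1T, hk2, h21, h5, h32⟩ := hC'
    dsimp only at hN hk1 hk1T hk2 h21 h5 h32
    have hpt : ∀ k3, W T (N, (k1, (k2, k3))) ≤
        (Set.Icc 1 k2).indicator (fun k3 => ENNReal.ofReal (k1 ^ 2 * k2 * k3)) k3 := by
      intro k3
      by_cases hU : (N, (k1, (k2, k3))) ∈ US T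
      · rw [W, Set.indicator_of_mem hU]
        obtain ⟨-, -, -, h3, h32', -, -, -⟩ := hU
        rw [Set.indicator_of_mem (Set.mem_Icc.2 ⟨h3, h32'⟩)]
        exact le_rfl
      · rw [W, Set.indicator_of_notMem hU]; exact zero_le
    calc ∫⁻ k3, W T (N, (k1, (k2, k3)))
        ≤ ∫⁻ k3, (Set.Icc 1 k2).indicator (fun k3 => ENNReal.ofReal (k1 ^ 2 * k2 * k3)) k3 :=
          lintegral_mono hpt
      _ = ∫⁻ k3 in Set.Icc 1 k2, ENNReal.ofReal (k1 ^ 2 * k2 * k3) :=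
          lintegral_indicator measurableSet_Icc _
      _ ≤ ∫⁻ _ in Set.Icc 1 k2, ENNReal.ofReal (k1 ^ 2 * k2 * k2) := by
          refine setLIntegral_mono measurable_const (fun k3 hk3 => ?_)
          refine ENNReal.ofReal_le_ofReal ?_
          exact mul_le_mul_of_nonneg_left hk3.2 (by nlinarith)
      _ = ENNReal.ofReal (k1 ^ 2 * k2 * k2) * volume (Set.Icc 1 k2) := setLIntegral_const _ _
      _ ≤ ENNReal.ofReal (k1 ^ 2 * k2 * k2) * ENNReal.ofReal k2 := by
          rw [Real.volume_Icc]
          exact mul_le_mul_right (ENNReal.ofReal_le_ofReal (by linarith)) _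
      _ = ENNReal.ofReal (k1 ^ 2 * k2 ^ 3) := by
          rw [← ENNReal.ofReal_mul (by nlinarith)]
          congr 1; ring
      _ = V2 T (N, (k1, k2)) := by
          rw [V2, Set.indicator_of_mem hC]
  · have hz : ∀ k3, W T (N, (k1, (k2, k3))) = 0 := by
      intro k3
      rw [W]
      refine Set.indicator_of_notMem (fun hU => hC ?_) _
      obtain ⟨a, b, c', d, e, g, h, i⟩ := hU
      exact ⟨a, b, c', le_trans d e, g, h, i⟩
    rw [V2, Set.indicator_of_notMem hC]
    simp [hz]

end Ads4Aux
namespace Ads4Aux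

lemma B2 (T : ℝ) (hT0 : (0:ℝ) < T) (N k1 : ℝ) :
    ∫⁻ k2, V2 T (N, (k1, k2)) ≤ V1 T (N, k1) := by
  by_cases hC : (N, k1) ∈ C1 T
  · have hC' := hC
    obtain ⟨hN, hk1, hk1T⟩ := hC'
    dsimp only at hN hk1 hk1T
    have hN0 : (0:ℝ) < N := by linarith
    have hk10 : (0:ℝ) < k1 := by linarith
    have hK20 : (0:ℝ) ≤ Real.sqrt (T / (N * k1 ^ 3)) := Real.sqrt_nonneg _
    have hK10 : (0:ℝ) ≤ (T / N) ^ ((1:ℝ)/5) := by positivity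
    have hpt : ∀ k2, V2 T (N, (k1, k2)) ≤
        (Set.Icc 0 (Real.sqrt (T / (N * k1 ^ 3)))).indicator
          (fun _ => ENNReal.ofReal (k1 ^ 2 *
            (((T / N) ^ ((1:ℝ)/5)) ^ 2 * Real.sqrt (T / (N * k1 ^ 3))))) k2 := by
      intro k2
      by_cases hC2 : (N, (k1, k2)) ∈ C2 T
      · have hC2' := hC2
        obtain ⟨-, -, -, hk2, h21, h5, h32⟩ := hC2'
        dsimp only at hk2 h21 h5 h32
        have hk20 : (0:ℝ) ≤ k2 := by linarith
        have hKK2 : k2 ≤ Real.sqrt (T / (N * k1 ^ 3)) := by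
          rw [Real.le_sqrt hk20 (by positivity)]
          rw [le_div_iff₀ (by positivity)]
          nlinarith [h32]
        have hKK1 : k2 ≤ (T / N) ^ ((1:ℝ)/5) := by
          have h1 : k2 ^ (5:ℕ) ≤ T / N := by
            rw [le_div_iff₀ hN0]; nlinarith [h5]
          calc k2 = ((k2 ^ (5:ℕ) : ℝ)) ^ ((1:ℝ)/5) := by
                rw [← Real.rpow_natCast k2 5, ← Real.rpow_mul hk20]; norm_num
            _ ≤ (T / N) ^ ((1:ℝ)/5) := Real.rpow_le_rpow (by positivity) h1 (by norm_num)
        rw [V2, Set.indicator_of_mem hC2, Set.indicator_of_mem (Set.mem_Icc.2 ⟨hk20, hKK2⟩)]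
        refine ENNReal.ofReal_le_ofReal ?_
        have hcube : k2 ^ 3 ≤ ((T / N) ^ ((1:ℝ)/5)) ^ 2 * Real.sqrt (T / (N * k1 ^ 3)) := by
          have e1 : k2 * k2 ≤ ((T / N) ^ ((1:ℝ)/5)) * ((T / N) ^ ((1:ℝ)/5)) :=
            mul_le_mul hKK1 hKK1 hk20 hK10
          have e2 : (k2 * k2) * k2 ≤ (((T / N) ^ ((1:ℝ)/5)) * ((T / N) ^ ((1:ℝ)/5))) *
              Real.sqrt (T / (N * k1 ^ 3)) :=
            mul_le_mul e1 hKK2 hk20 (by positivity)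
          nlinarith [e2]
        nlinarith [hcube, sq_nonneg k1]
      · rw [V2, Set.indicator_of_notMem hC2]; exact zero_le
    calc ∫⁻ k2, V2 T (N, (k1, k2))
        ≤ ∫⁻ k2, (Set.Icc 0 (Real.sqrt (T / (N * k1 ^ 3)))).indicator
            (fun _ => ENNReal.ofReal (k1 ^ 2 *
              (((T / N) ^ ((1:ℝ)/5)) ^ 2 * Real.sqrt (T / (N * k1 ^ 3))))) k2 :=
          lintegral_mono hpt
      _ = ENNReal.ofReal (k1 ^ 2 * (((T / N) ^ ((1:ℝ)/5)) ^ 2 *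
            Real.sqrt (T / (N * k1 ^ 3)))) * volume (Set.Icc 0 (Real.sqrt (T / (N * k1 ^ 3)))) := by
          rw [lintegral_indicator measurableSet_Icc, setLIntegral_const]
      _ = ENNReal.ofReal (k1 ^ 2 * (((T / N) ^ ((1:ℝ)/5)) ^ 2 *
            Real.sqrt (T / (N * k1 ^ 3)))) * ENNReal.ofReal (Real.sqrt (T / (N * k1 ^ 3))) := by
          rw [Real.volume_Icc, sub_zero]
      _ = ENNReal.ofReal ((T / N) ^ ((2:ℝ)/5) * (T / N) * k1⁻¹) := by
          rw [← ENNReal.ofReal_mul (by positivity)]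
          congr 1
          have e1 : ((T / N) ^ ((1:ℝ)/5)) ^ (2:ℕ) = (T / N) ^ ((2:ℝ)/5) := by
            rw [← Real.rpow_natCast ((T / N) ^ ((1:ℝ)/5)) 2, ← Real.rpow_mul (by positivity)]
            norm_num
          have e2 : Real.sqrt (T / (N * k1 ^ 3)) * Real.sqrt (T / (N * k1 ^ 3)) =
              T / (N * k1 ^ 3) := Real.mul_self_sqrt (by positivity)
          calc k1 ^ 2 * (((T / N) ^ ((1:ℝ)/5)) ^ 2 * Real.sqrt (T / (N * k1 ^ 3))) *
                Real.sqrt (T / (N * k1 ^ 3))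
              = ((T / N) ^ ((1:ℝ)/5)) ^ (2:ℕ) * (k1 ^ 2 *
                (Real.sqrt (T / (N * k1 ^ 3)) * Real.sqrt (T / (N * k1 ^ 3)))) := by ring
            _ = (T / N) ^ ((2:ℝ)/5) * (k1 ^ 2 * (T / (N * k1 ^ 3))) := by rw [e1, e2]
            _ = (T / N) ^ ((2:ℝ)/5) * (T / N) * k1⁻¹ := by
                field_simp
      _ = V1 T (N, k1) := by rw [V1, Set.indicator_of_mem hC]
  · have hz : ∀ k2, V2 T (N, (k1, k2)) = 0 := by
      intro k2
      rw [V2]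
      refine Set.indicator_of_notMem (fun hC2 => hC ?_) _
      obtain ⟨a, b, c', -, -, -, -⟩ := hC2
      exact ⟨a, b, c'⟩
    rw [V1, Set.indicator_of_notMem hC]
    simp [hz]

lemma B1 (T : ℝ) (hT1 : (1:ℝ) ≤ T) (N : ℝ) :
    ∫⁻ k1, V1 T (N, k1) ≤ V0 T N := by
  have hT0 : (0:ℝ) < T := lt_of_lt_of_le zero_lt_one hT1
  by_cases hN : N ∈ Set.Ici (1:ℝ)
  · have hN1 : (1:ℝ) ≤ N := hN
    have hN0 : (0:ℝ) < N := by linarith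
    have hcN0 : (0:ℝ) ≤ (T / N) ^ ((2:ℝ)/5) * (T / N) := by positivity
    have hsT1 : (1:ℝ) ≤ Real.sqrt T := by
      rw [show (1:ℝ) = Real.sqrt 1 from (Real.sqrt_one).symm]
      exact Real.sqrt_le_sqrt hT1
    have hpt : ∀ k1, V1 T (N, k1) ≤
        (Set.Icc 1 (Real.sqrt T)).indicator
          (fun k1 => ENNReal.ofReal (((T / N) ^ ((2:ℝ)/5) * (T / N)) * k1⁻¹)) k1 := by
      intro k1
      by_cases hC : (N, k1) ∈ C1 T
      · have hC' := hC
        obtain ⟨-, hk1, hk1T⟩ := hC'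
        dsimp only at hk1 hk1T
        have hmem : k1 ∈ Set.Icc 1 (Real.sqrt T) := by
          refine Set.mem_Icc.2 ⟨hk1, ?_⟩
          rw [Real.le_sqrt (by linarith) hT0.le]
          exact hk1T
        rw [V1, Set.indicator_of_mem hC, Set.indicator_of_mem hmem]
      · rw [V1, Set.indicator_of_notMem hC]; exact zero_le
    have key : ∫⁻ k1 in Set.Icc 1 (Real.sqrt T),
        ENNReal.ofReal (((T / N) ^ ((2:ℝ)/5) * (T / N)) * k1⁻¹) =
        ENNReal.ofReal (((T / N) ^ ((2:ℝ)/5) * (T / N)) * Real.log (Real.sqrt T)) := by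
      have hioc : MeasureTheory.volume.restrict (Set.Icc (1:ℝ) (Real.sqrt T)) =
          MeasureTheory.volume.restrict (Set.Ioc (1:ℝ) (Real.sqrt T)) :=
        (Measure.restrict_congr_set Ioc_ae_eq_Icc).symm
      have hcont : ContinuousOn (fun x : ℝ => ((T / N) ^ ((2:ℝ)/5) * (T / N)) * x⁻¹)
          (Set.Icc 1 (Real.sqrt T)) := by
        refine continuousOn_const.mul (ContinuousOn.inv₀ continuousOn_id ?_)
        intro x hx
        exact ne_of_gt (lt_of_lt_of_le zero_lt_one hx.1)
      have hint : IntegrableOn (fun x : ℝ => ((T / N) ^ ((2:ℝ)/5) * (T / N)) * x⁻¹)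
          (Set.Ioc 1 (Real.sqrt T)) :=
        (hcont.integrableOn_Icc).mono_set Set.Ioc_subset_Icc_self
      have hnn : 0 ≤ᵐ[MeasureTheory.volume.restrict (Set.Ioc (1:ℝ) (Real.sqrt T))]
          (fun x : ℝ => ((T / N) ^ ((2:ℝ)/5) * (T / N)) * x⁻¹) := by
        refine (ae_restrict_iff' measurableSet_Ioc).2 (Filter.Eventually.of_forall ?_)
        intro x hx
        simp only [Pi.zero_apply]
        have : (0:ℝ) < x := lt_trans zero_lt_one hx.1
        positivity
      rw [show ∫⁻ k1 in Set.Icc (1:ℝ) (Real.sqrt T),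
            ENNReal.ofReal (((T / N) ^ ((2:ℝ)/5) * (T / N)) * k1⁻¹) =
          ∫⁻ k1 in Set.Ioc (1:ℝ) (Real.sqrt T),
            ENNReal.ofReal (((T / N) ^ ((2:ℝ)/5) * (T / N)) * k1⁻¹) from by rw [hioc]]
      rw [← ofReal_integral_eq_lintegral_ofReal hint hnn]
      congr 1
      rw [MeasureTheory.integral_const_mul]
      congr 1
      rw [← intervalIntegral.integral_of_le hsT1]
      rw [integral_inv (by
        intro hmem
        rw [Set.uIcc_of_le hsT1] at hmem
        linarith [hmem.1])]
      rw [div_one]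
    calc ∫⁻ k1, V1 T (N, k1)
        ≤ ∫⁻ k1, (Set.Icc 1 (Real.sqrt T)).indicator
            (fun k1 => ENNReal.ofReal (((T / N) ^ ((2:ℝ)/5) * (T / N)) * k1⁻¹)) k1 :=
          lintegral_mono hpt
      _ = ∫⁻ k1 in Set.Icc 1 (Real.sqrt T),
            ENNReal.ofReal (((T / N) ^ ((2:ℝ)/5) * (T / N)) * k1⁻¹) :=
          lintegral_indicator measurableSet_Icc _
      _ = ENNReal.ofReal (((T / N) ^ ((2:ℝ)/5) * (T / N)) * Real.log (Real.sqrt T)) := key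
      _ = V0 T N := by
          rw [V0, Set.indicator_of_mem hN, Real.log_sqrt hT0.le]
  · have hz : ∀ k1, V1 T (N, k1) = 0 := by
      intro k1
      rw [V1]
      refine Set.indicator_of_notMem (fun hC => hN ?_) _
      exact hC.1
    rw [V0, Set.indicator_of_notMem hN]
    simp [hz]

lemma B0 (T : ℝ) (hT1 : (1:ℝ) ≤ T) :
    ∫⁻ N, V0 T N ≤ ENNReal.ofReal (T ^ ((7:ℝ)/5) * (Real.log T / 2) * (5/2)) := by
  have hT0 : (0:ℝ) < T := lt_of_lt_of_le zero_lt_one hT1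
  have hlog : (0:ℝ) ≤ Real.log T := Real.log_nonneg hT1
  have hpt : ∀ N, V0 T N ≤ (Set.Ici (1:ℝ)).indicator
      (fun N => ENNReal.ofReal ((T ^ ((7:ℝ)/5) * (Real.log T / 2)) * N ^ (-(7:ℝ)/5))) N := by
    intro N
    by_cases hN : N ∈ Set.Ici (1:ℝ)
    · have hN1 : (1:ℝ) ≤ N := hN
      have hN0 : (0:ℝ) < N := by linarith
      rw [V0, Set.indicator_of_mem hN, Set.indicator_of_mem hN]
      refine ENNReal.ofReal_le_ofReal (le_of_eq ?_)
      have hdiv : (0:ℝ) < T / N := by positivity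
      have e1 : (T / N) ^ ((2:ℝ)/5) * (T / N) = (T / N) ^ ((7:ℝ)/5) := by
        rw [show ((7:ℝ)/5) = (2:ℝ)/5 + 1 by norm_num, Real.rpow_add hdiv, Real.rpow_one]
      have e2 : (T / N) ^ ((7:ℝ)/5) = T ^ ((7:ℝ)/5) * N ^ (-(7:ℝ)/5) := by
        rw [show (-7:ℝ)/5 = -((7:ℝ)/5) by norm_num, Real.div_rpow hT0.le hN0.le,
          Real.rpow_neg hN0.le, div_eq_mul_inv]
      rw [e1, e2]
      ring
    · rw [V0, Set.indicator_of_notMem hN, Set.indicator_of_notMem hN]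
  have hIci : ∫⁻ N in Set.Ici (1:ℝ), ENNReal.ofReal (N ^ (-(7:ℝ)/5)) =
      ENNReal.ofReal (5/2) := by
    have hioi : MeasureTheory.volume.restrict (Set.Ici (1:ℝ)) =
        MeasureTheory.volume.restrict (Set.Ioi (1:ℝ)) :=
      (Measure.restrict_congr_set Ioi_ae_eq_Ici).symm
    have hint : IntegrableOn (fun x : ℝ => x ^ (-(7:ℝ)/5)) (Set.Ioi 1) :=
      integrableOn_Ioi_rpow_of_lt (by norm_num) zero_lt_one
    have hnn : 0 ≤ᵐ[MeasureTheory.volume.restrict (Set.Ioi (1:ℝ))]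
        (fun x : ℝ => x ^ (-(7:ℝ)/5)) := by
      refine (ae_restrict_iff' measurableSet_Ioi).2 (Filter.Eventually.of_forall ?_)
      intro x hx
      simp only [Pi.zero_apply]
      have : (0:ℝ) < x := lt_trans zero_lt_one hx
      positivity
    rw [show ∫⁻ N in Set.Ici (1:ℝ), ENNReal.ofReal (N ^ (-(7:ℝ)/5)) =
        ∫⁻ N in Set.Ioi (1:ℝ), ENNReal.ofReal (N ^ (-(7:ℝ)/5)) from by rw [hioi]]
    rw [← ofReal_integral_eq_lintegral_ofReal hint hnn]
    congr 1
    rw [integral_Ioi_rpow_of_lt (by norm_num) zero_lt_one]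
    rw [Real.one_rpow]
    norm_num
  calc ∫⁻ N, V0 T N
      ≤ ∫⁻ N, (Set.Ici (1:ℝ)).indicator
          (fun N => ENNReal.ofReal ((T ^ ((7:ℝ)/5) * (Real.log T / 2)) * N ^ (-(7:ℝ)/5))) N :=
        lintegral_mono hpt
    _ = ∫⁻ N in Set.Ici (1:ℝ),
          ENNReal.ofReal ((T ^ ((7:ℝ)/5) * (Real.log T / 2)) * N ^ (-(7:ℝ)/5)) :=
        lintegral_indicator measurableSet_Ici _
    _ = ∫⁻ N in Set.Ici (1:ℝ),
          ENNReal.ofReal (T ^ ((7:ℝ)/5) * (Real.log T / 2)) * ENNReal.ofReal (N ^ (-(7:ℝ)/5)) := by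
        refine lintegral_congr (fun N => ?_)
        rw [← ENNReal.ofReal_mul (by positivity)]
    _ = ENNReal.ofReal (T ^ ((7:ℝ)/5) * (Real.log T / 2)) *
          ∫⁻ N in Set.Ici (1:ℝ), ENNReal.ofReal (N ^ (-(7:ℝ)/5)) :=
        lintegral_const_mul' _ _ ENNReal.ofReal_ne_top
    _ = ENNReal.ofReal (T ^ ((7:ℝ)/5) * (Real.log T / 2)) * ENNReal.ofReal (5/2) := by
        rw [hIci]
    _ = ENNReal.ofReal (T ^ ((7:ℝ)/5) * (Real.log T / 2) * (5/2)) :=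
        (ENNReal.ofReal_mul (by positivity)).symm

end Ads4Aux
namespace Ads4Aux

lemma tonelli_W (T : ℝ) :
    ∫⁻ x, W T x = ∫⁻ N, ∫⁻ k1, ∫⁻ k2, ∫⁻ k3, W T (N, (k1, (k2, k3))) := by
  rw [MeasureTheory.Measure.volume_eq_prod, lintegral_prod _ (W_meas T).aemeasurable]
  refine lintegral_congr fun N => ?_
  have h1 : Measurable fun y : ℝ × ℝ × ℝ => W T (N, y) :=
    (W_meas T).comp measurable_prodMk_left
  rw [MeasureTheory.Measure.volume_eq_prod, lintegral_prod _ h1.aemeasurable]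
  refine lintegral_congr fun k1 => ?_
  have h2 : Measurable fun z : ℝ × ℝ => W T (N, (k1, z)) :=
    h1.comp measurable_prodMk_left
  rw [MeasureTheory.Measure.volume_eq_prod, lintegral_prod _ h2.aemeasurable]

lemma upper_T (T : ℝ) (hT : (2:ℝ) ^ (32:ℕ) ≤ T) :
    LT T ≤ ENNReal.ofReal (2 * T ^ ((7:ℝ)/5) * Real.log T) := by
  have hT1 : (1:ℝ) ≤ T := le_trans (by norm_num) hT
  have hT0 : (0:ℝ) < T := lt_of_lt_of_le zero_lt_one hT1
  have hlog : (0:ℝ) ≤ Real.log T := Real.log_nonneg hT1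
  have step1 : LT T ≤ ∫⁻ x, W T x := by
    rw [LT, ← lintegral_indicator (measurableSet_regionT T)]
    refine lintegral_mono fun x => ?_
    exact Set.indicator_le_indicator_of_subset (region_subset_US T hT1)
      (fun a => zero_le) x
  calc LT T ≤ ∫⁻ x, W T x := step1
    _ = ∫⁻ N, ∫⁻ k1, ∫⁻ k2, ∫⁻ k3, W T (N, (k1, (k2, k3))) := tonelli_W T
    _ ≤ ∫⁻ N, V0 T N := by
        refine lintegral_mono fun N => ?_
        refine le_trans ?_ (B1 T hT1 N)
        refine lintegral_mono fun k1 => ?_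
        refine le_trans ?_ (B2 T hT0 N k1)
        refine lintegral_mono fun k2 => ?_
        exact B3 T N k1 k2
    _ ≤ ENNReal.ofReal (T ^ ((7:ℝ)/5) * (Real.log T / 2) * (5/2)) := B0 T hT1
    _ ≤ ENNReal.ofReal (2 * T ^ ((7:ℝ)/5) * Real.log T) := by
        refine ENNReal.ofReal_le_ofReal ?_
        have h75 : (0:ℝ) ≤ T ^ ((7:ℝ)/5) := by positivity
        nlinarith

end Ads4Aux
namespace Ads4Aux

lemma T_large (μ : ℝ) (hμ : 0 < μ) (hμ' : μ ≤ 1/256) :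
    (2:ℝ) ^ (32:ℕ) ≤ μ ^ (-(4:ℝ)) := by
  have h1 : μ ^ (-(4:ℝ)) = (μ ^ (4:ℕ))⁻¹ := by
    rw [← Real.rpow_natCast μ 4, ← Real.rpow_neg hμ.le]
    norm_num
  have h2 : μ ^ (4:ℕ) ≤ (1/256:ℝ) ^ (4:ℕ) := pow_le_pow_left₀ hμ.le hμ' 4
  have h3 : (0:ℝ) < μ ^ (4:ℕ) := by positivity
  have h4 : ((1/256:ℝ) ^ (4:ℕ))⁻¹ ≤ (μ ^ (4:ℕ))⁻¹ := by
    exact inv_anti₀ h3 h2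
  rw [h1]
  refine le_trans ?_ h4
  norm_num

lemma count_bounds (μ : ℝ) (hμ : 0 < μ) (hμ' : μ ≤ 1/256) :
    (μ ^ (-(4:ℝ))) ^ ((7:ℝ)/5) / 2 ^ (34:ℕ) ≤ ads4Count μ ∧
    ads4Count μ ≤ 2 * (μ ^ (-(4:ℝ))) ^ ((7:ℝ)/5) * Real.log (μ ^ (-(4:ℝ))) := by
  have hT := T_large μ hμ hμ'
  have hT1 : (1:ℝ) ≤ μ ^ (-(4:ℝ)) := le_trans (by norm_num) hT
  have hT0 : (0:ℝ) < μ ^ (-(4:ℝ)) := lt_of_lt_of_le zero_lt_one hT1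
  have hlow := lower_T _ hT
  have hup := upper_T _ hT
  have hfin : LT (μ ^ (-(4:ℝ))) ≠ ⊤ := ne_top_of_le_ne_top ENNReal.ofReal_ne_top hup
  rw [count_eq]
  constructor
  · have := ENNReal.toReal_mono hfin hlow
    rwa [ENNReal.toReal_ofReal (by positivity)] at this
  · refine ENNReal.toReal_le_of_le_ofReal ?_ hup
    have hlog : (0:ℝ) ≤ Real.log (μ ^ (-(4:ℝ))) := Real.log_nonneg hT1
    positivity

end Ads4Aux

open Ads4Aux in
/-- The count `𝔑^{(Q=4)}_{AdS₄}(μ)` grows like `μ^{−28/5}` up to subpolynomial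
factors: `lim_{μ→0⁺} (log I(μ))/(log(1/μ)) = 28/5`. -/
theorem ads4_count_growth :
    Tendsto (fun μ : ℝ => Real.log (ads4Count μ) / Real.log (1 / μ))
      (nhdsWithin 0 (Set.Ioi 0)) (nhds (28 / 5)) := by
  have hl : Tendsto (fun μ : ℝ => Real.log (1/μ)) (nhdsWithin 0 (Set.Ioi 0)) atTop := by
    have h1 : Tendsto (fun μ : ℝ => 1/μ) (nhdsWithin 0 (Set.Ioi 0)) atTop := by
      simpa [one_div] using (tendsto_inv_nhdsGT_zero : Tendsto (fun μ : ℝ => μ⁻¹)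
        (nhdsWithin 0 (Set.Ioi 0)) atTop)
    exact Real.tendsto_log_atTop.comp h1
  -- the lower squeeze function
  have hg : Tendsto (fun μ : ℝ => 28/5 - 34 * Real.log 2 / Real.log (1/μ))
      (nhdsWithin 0 (Set.Ioi 0)) (nhds (28/5)) := by
    have h1 : Tendsto (fun μ : ℝ => 34 * Real.log 2 / Real.log (1/μ))
        (nhdsWithin 0 (Set.Ioi 0)) (nhds 0) := tendsto_const_nhds.div_atTop hl
    simpa using tendsto_const_nhds.sub h1
  -- the upper squeeze function
  have hh : Tendsto (fun μ : ℝ =>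
      28/5 + ((Real.log 2 + Real.log 4) / Real.log (1/μ) +
        Real.log (Real.log (1/μ)) / Real.log (1/μ)))
      (nhdsWithin 0 (Set.Ioi 0)) (nhds (28/5)) := by
    have h1 : Tendsto (fun μ : ℝ => (Real.log 2 + Real.log 4) / Real.log (1/μ))
        (nhdsWithin 0 (Set.Ioi 0)) (nhds 0) := tendsto_const_nhds.div_atTop hl
    have h2 : Tendsto (fun μ : ℝ => Real.log (Real.log (1/μ)) / Real.log (1/μ))
        (nhdsWithin 0 (Set.Ioi 0)) (nhds 0) := by
      exact (isLittleO_log_id_atTop.tendsto_div_nhds_zero).comp hl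
    simpa using tendsto_const_nhds.add (h1.add h2)
  have hmem : Set.Ioc (0:ℝ) (1/256) ∈ nhdsWithin (0:ℝ) (Set.Ioi 0) :=
    Ioc_mem_nhdsGT_of_mem ⟨le_refl 0, by norm_num⟩
  refine tendsto_of_tendsto_of_tendsto_of_le_of_le' hg hh ?_ ?_
  · -- lower bound eventually
    refine Filter.eventually_of_mem hmem fun μ hμ => ?_
    obtain ⟨hμ0, hμ1⟩ := hμ
    have hℓ : (0:ℝ) < Real.log (1/μ) := Real.log_pos (one_lt_one_div hμ0 (by linarith))
    have hb := (count_bounds μ hμ0 hμ1).1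
    have hT1 : (1:ℝ) ≤ μ ^ (-(4:ℝ)) := le_trans (by norm_num) (T_large μ hμ0 hμ1)
    have hT0 : (0:ℝ) < μ ^ (-(4:ℝ)) := lt_of_lt_of_le zero_lt_one hT1
    have hlogT : Real.log (μ ^ (-(4:ℝ))) = 4 * Real.log (1/μ) := by
      rw [Real.log_rpow hμ0, one_div, Real.log_inv]
      ring
    have hcpos : (0:ℝ) < (μ ^ (-(4:ℝ))) ^ ((7:ℝ)/5) / 2 ^ (34:ℕ) := by positivity
    have hlogc : Real.log ((μ ^ (-(4:ℝ))) ^ ((7:ℝ)/5) / 2 ^ (34:ℕ)) =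
        28/5 * Real.log (1/μ) - 34 * Real.log 2 := by
      rw [Real.log_div (by positivity) (by positivity), Real.log_rpow hT0,
        Real.log_pow, hlogT]
      push_cast
      ring
    have hmono : Real.log ((μ ^ (-(4:ℝ))) ^ ((7:ℝ)/5) / 2 ^ (34:ℕ)) ≤
        Real.log (ads4Count μ) := Real.log_le_log hcpos hb
    rw [hlogc] at hmono
    rw [le_div_iff₀ hℓ]
    have he : (28/5 - 34 * Real.log 2 / Real.log (1/μ)) * Real.log (1/μ) =
        28/5 * Real.log (1/μ) - 34 * Real.log 2 := by
      field_simp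
    rw [he]
    exact hmono
  · -- upper bound eventually
    refine Filter.eventually_of_mem hmem fun μ hμ => ?_
    obtain ⟨hμ0, hμ1⟩ := hμ
    have hℓ : (0:ℝ) < Real.log (1/μ) := Real.log_pos (one_lt_one_div hμ0 (by linarith))
    have hb1 := (count_bounds μ hμ0 hμ1).1
    have hb2 := (count_bounds μ hμ0 hμ1).2
    have hT1 : (1:ℝ) ≤ μ ^ (-(4:ℝ)) := le_trans (by norm_num) (T_large μ hμ0 hμ1)
    have hT0 : (0:ℝ) < μ ^ (-(4:ℝ)) := lt_of_lt_of_le zero_lt_one hT1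
    have hlogT : Real.log (μ ^ (-(4:ℝ))) = 4 * Real.log (1/μ) := by
      rw [Real.log_rpow hμ0, one_div, Real.log_inv]
      ring
    have hcpos : (0:ℝ) < (μ ^ (-(4:ℝ))) ^ ((7:ℝ)/5) / 2 ^ (34:ℕ) := by positivity
    have hcount : (0:ℝ) < ads4Count μ := lt_of_lt_of_le hcpos hb1
    have hlogTpos : (0:ℝ) < Real.log (μ ^ (-(4:ℝ))) := by
      rw [hlogT]; linarith
    have hmono : Real.log (ads4Count μ) ≤
        Real.log (2 * (μ ^ (-(4:ℝ))) ^ ((7:ℝ)/5) * Real.log (μ ^ (-(4:ℝ)))) :=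
      Real.log_le_log hcount hb2
    have hlogc : Real.log (2 * (μ ^ (-(4:ℝ))) ^ ((7:ℝ)/5) * Real.log (μ ^ (-(4:ℝ)))) =
        Real.log 2 + 28/5 * Real.log (1/μ) + (Real.log 4 + Real.log (Real.log (1/μ))) := by
      rw [Real.log_mul (by positivity) (ne_of_gt hlogTpos),
        Real.log_mul (by norm_num) (by positivity),
        Real.log_rpow hT0, hlogT,
        Real.log_mul (by norm_num) (ne_of_gt hℓ)]
      ring
    rw [hlogc] at hmono
    rw [div_le_iff₀ hℓ]
    have he : (28/5 + ((Real.log 2 + Real.log 4) / Real.log (1/μ) +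
        Real.log (Real.log (1/μ)) / Real.log (1/μ))) * Real.log (1/μ) =
        Real.log 2 + 28/5 * Real.log (1/μ) + (Real.log 4 + Real.log (Real.log (1/μ))) := by
      field_simp
      ring
    rw [he]
    exact hmono
end
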